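/- arXiv:1711.01636 — 4 statements merged into one kernel-verified Lean document; each statement's English description precedes it below -/
import Mathlib

section
/- For every integer k ≥ 1, the graph G_k^+ is isomorphic to the odd graph O_k = K(2k+1, k). Concretely, the map sending x ∈ B_k^0 to the (2k+1)-bit string x0 and x ∈ B_k^1 to x̄1, interpreted as characteristic vectors of k-element subsets of [2k+1], is a graph isomorphism. -/
/-- `x ∈ B_k`: bitstring of length `2k` with weight `k` or `k+1`. -/
def inB (k : ℕ) (x : List Bool) : Prop :=
  x.length = 2*k ∧ (x.count true = k ∨ x.count true = k+1)

/-- Dyck word: equally many 1s and 0s, every prefix has at least as many 1s as 0s. -/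
def isDyck (x : List Bool) : Prop :=
  x.count true = x.count false ∧ ∀ n, (x.take n).count false ≤ (x.take n).count true

/-- Complement of the reverse. -/
def mirror (x : List Bool) : List Bool := x.reverse.map (fun b => !b)

/-- Bitwise complement. -/
def compl (x : List Bool) : List Bool := x.map (fun b => !b)

/-- Specification of the recursively defined bit-flip sequence `π`. -/
def IsPiFun (π : List Bool → List ℕ) : Prop :=
  π [] = [] ∧ ∀ u v : List Bool, isDyck u → isDyck v →
    π (true :: u ++ false :: v) =
      (u.length + 2) :: ((π (mirror u)).map (fun a => u.length + 2 - a))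
        ++ 1 :: ((π v).map (fun a => u.length + 2 + a))

/-- Flip the bit at (1-indexed) position `a`. -/
def flipBit (y : List Bool) (a : ℕ) : List Bool := y.set (a-1) (!(y.getD (a-1) false))

/-- The path `P(x)`, as the list of vertices obtained by flipping bits in order `π x`. -/
def pathOf (π : List Bool → List ℕ) (x : List Bool) : List (List Bool) :=
  List.scanl flipBit x (π x)

/-- Adjacency in `G_k`: both vertices in `B_k`, differing in exactly one position. -/
def GkAdj (k : ℕ) (x y : List Bool) : Prop :=
  inB k x ∧ inB k y ∧ (List.range (2*k)).countP (fun i => x.getD i false != y.getD i false) = 1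

/-- Adjacency in `G_k^+`: a `G_k` edge or a complement edge. -/
def GkPlusAdj (k : ℕ) (x y : List Bool) : Prop :=
  GkAdj k x y ∨ (inB k x ∧ inB k y ∧ (y = compl x ∨ x = compl y))
/-- The Kneser graph `K(n,k)`: vertices are `k`-element subsets of `[n]`,
edges connect disjoint subsets. -/
def kneser (n k : ℕ) : SimpleGraph {s : Finset (Fin n) // s.card = k} where
  Adj s t := s ≠ t ∧ Disjoint s.val t.val
  symm := ⟨fun s t h => ⟨h.1.symm, h.2.symm⟩⟩
  loopless := ⟨fun s h => h.1 rfl⟩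

/-- The graph `G_k^+` on `B_k`: bit-flip edges together with complement edges. -/
def GkPlus (k : ℕ) : SimpleGraph {x : List Bool // inB k x} where
  Adj x y := x ≠ y ∧
    (((List.range (2*k)).countP (fun i => x.val.getD i false != y.val.getD i false) = 1)
      ∨ (x.val.count true = k ∧ y.val = compl x.val)
      ∨ (y.val.count true = k ∧ x.val = compl y.val))
  symm := by
    constructor
    rintro x y ⟨hne, h⟩
    refine ⟨hne.symm, ?_⟩
    rcases h with h | h | h
    · left
      have : (fun i => x.val.getD i false != y.val.getD i false)
          = (fun i => y.val.getD i false != x.val.getD i false) := by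
        funext i; simp [bne, Bool.beq_comm]
      rwa [this] at h
    · right; right; exact h
    · right; left; exact h
  loopless := ⟨fun x h => h.1 rfl⟩

/-- The characteristic subset of `[n]` of a bitstring. -/
def charSet (n : ℕ) (y : List Bool) : Finset (Fin n) :=
  Finset.univ.filter (fun i => y.getD i.val false = true)


theorem aux_countP_range_card (m : ℕ) (p : ℕ → Bool) :
    (List.range m).countP p = (Finset.univ.filter (fun i : Fin m => p i.val = true)).card := by
  rw [Finset.card_filter, Fin.sum_univ_eq_sum_range (fun i => if p i = true then 1 else 0)]
  induction m with
  | zero => simp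
  | succ n ih =>
    rw [List.range_succ, List.countP_append, ih, Finset.sum_range_succ]
    simp [List.countP, List.countP.go]

theorem aux_count_range (x : List Bool) : ∀ m, x.length ≤ m →
    (List.range m).countP (fun i => x.getD i false) = x.count true := by
  induction x with
  | nil => intro m _; simp
  | cons b x ih =>
    intro m hm
    obtain ⟨n, rfl⟩ : ∃ n, m = n + 1 := ⟨m - 1, by simp at hm; omega⟩
    rw [List.range_succ_eq_map, List.countP_cons, List.countP_map]
    have : ((fun i => (b :: x).getD i false) ∘ Nat.succ) = fun i => x.getD i false := by
      funext i; simp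
    rw [this, ih n (by simp at hm; omega), List.count_cons]
    cases b <;> simp [Nat.add_comm]

/-- card of the true-set equals the weight. -/
theorem aux_card_Tset (x : List Bool) (m : ℕ) (h : x.length ≤ m) :
    (Finset.univ.filter (fun i : Fin m => x.getD i.val false = true)).card = x.count true := by
  rw [← aux_countP_range_card m (fun i => x.getD i false), aux_count_range x m h]

theorem aux_card_Fset (x : List Bool) (m : ℕ) (h : x.length ≤ m) :
    (Finset.univ.filter (fun i : Fin m => x.getD i.val false = false)).card
      = m - x.count true := by
  have h1 := Finset.card_filter_add_card_filter_not
    (s := (Finset.univ : Finset (Fin m))) (fun i : Fin m => x.getD i.val false = true)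
  have h2 : (Finset.univ.filter (fun i : Fin m => ¬ x.getD i.val false = true))
      = (Finset.univ.filter (fun i : Fin m => x.getD i.val false = false)) := by
    apply Finset.filter_congr; intro i _; simp
  rw [aux_card_Tset x m h, h2, Finset.card_univ, Fintype.card_fin] at h1
  omega

theorem aux_getD_append_false {k : ℕ} {x : List Bool} (h : x.length = 2*k) (i : Fin (2*k+1)) :
    (x ++ [false]).getD i.val false = x.getD i.val false := by
  have hi1 : i.val < (x ++ [false]).length := by simp only [List.length_append, h]; simp; have := i.isLt; omega
  rcases Nat.lt_or_ge i.val (2*k) with hi | hi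
  · have hx : i.val < x.length := by omega
    rw [List.getD_eq_getElem _ _ hi1, List.getD_eq_getElem _ _ hx,
      List.getElem_append_left hx]
  · have h2 : i.val = 2*k := by omega
    rw [List.getD_eq_getElem _ _ hi1, List.getD_eq_default _ _ (by omega),
      List.getElem_append_right (by omega)]
    simp [h, h2]

theorem aux_getD_compl_append_true {k : ℕ} {x : List Bool} (h : x.length = 2*k) (i : Fin (2*k+1)) :
    ((compl x ++ [true]).getD i.val false = true) ↔ (x.getD i.val false = false) := by
  have hl : (compl x).length = 2*k := by simp [_root_.compl, h]
  have hi1 : i.val < (compl x ++ [true]).length := by simp only [List.length_append, hl]; simp; have := i.isLt; omega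
  rcases Nat.lt_or_ge i.val (2*k) with hi | hi
  · have hx : i.val < x.length := by omega
    rw [List.getD_eq_getElem _ _ hi1, List.getElem_append_left (by omega : i.val < (compl x).length),
      List.getD_eq_getElem _ _ hx]
    simp [_root_.compl, List.getElem_map]
  · have h2 : i.val = 2*k := by omega
    rw [List.getD_eq_getElem _ _ hi1, List.getD_eq_default _ _ (by omega),
      List.getElem_append_right (by omega)]
    simp [hl, h2]

theorem aux_mem_charSet_appF {k : ℕ} {x : List Bool} (h : x.length = 2*k) (i : Fin (2*k+1)) :
    i ∈ charSet (2*k+1) (x ++ [false]) ↔ x.getD i.val false = true := by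
  simp only [charSet, Finset.mem_filter, Finset.mem_univ, true_and]
  rw [aux_getD_append_false h i]

theorem aux_mem_charSet_complT {k : ℕ} {x : List Bool} (h : x.length = 2*k) (i : Fin (2*k+1)) :
    i ∈ charSet (2*k+1) (compl x ++ [true]) ↔ x.getD i.val false = false := by
  simp only [charSet, Finset.mem_filter, Finset.mem_univ, true_and]
  exact aux_getD_compl_append_true h i

noncomputable def fset (k : ℕ) (x : List Bool) : Finset (Fin (2*k+1)) :=
  if x.count true = k then charSet (2*k+1) (x ++ [false])
  else charSet (2*k+1) (compl x ++ [true])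

theorem aux_mem_fset_T {k : ℕ} {x : List Bool} (h : x.length = 2*k) (hw : x.count true = k)
    (i : Fin (2*k+1)) : i ∈ fset k x ↔ x.getD i.val false = true := by
  rw [fset, if_pos hw]; exact aux_mem_charSet_appF h i

theorem aux_mem_fset_F {k : ℕ} {x : List Bool} (h : x.length = 2*k) (hw : x.count true = k+1)
    (i : Fin (2*k+1)) : i ∈ fset k x ↔ x.getD i.val false = false := by
  rw [fset, if_neg (by omega)]; exact aux_mem_charSet_complT h i

theorem aux_fset_card {k : ℕ} {x : List Bool} (hx : inB k x) : (fset k x).card = k := by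
  obtain ⟨hl, hw | hw⟩ := hx
  · have : fset k x = Finset.univ.filter (fun i : Fin (2*k+1) => x.getD i.val false = true) := by
      ext i; rw [aux_mem_fset_T hl hw i, Finset.mem_filter]; simp
    rw [this, aux_card_Tset x (2*k+1) (by omega), hw]
  · have : fset k x = Finset.univ.filter (fun i : Fin (2*k+1) => x.getD i.val false = false) := by
      ext i; rw [aux_mem_fset_F hl hw i, Finset.mem_filter]; simp
    rw [this, aux_card_Fset x (2*k+1) (by omega), hw]; omega

theorem aux_count_compl (x : List Bool) : (compl x).count true = x.length - x.count true := by
  induction x with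
  | nil => simp [_root_.compl]
  | cons b x ih =>
    have hle : x.count true ≤ x.length := List.count_le_length
    cases b <;> simp [_root_.compl, List.count_cons] at ih ⊢ <;> omega

theorem aux_diff_card {k : ℕ} {x y : List Bool} (hx : x.length = 2*k) (hy : y.length = 2*k) :
    (List.range (2*k)).countP (fun i => x.getD i false != y.getD i false)
      = (Finset.univ.filter
          (fun i : Fin (2*k+1) => ¬ x.getD i.val false = y.getD i.val false)).card := by
  have h1 : (List.range (2*k+1)).countP (fun i => x.getD i false != y.getD i false)
      = (List.range (2*k)).countP (fun i => x.getD i false != y.getD i false) := by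
    rw [List.range_succ, List.countP_append]
    have : x.getD (2*k) false = false := List.getD_eq_default _ _ (by omega)
    have : y.getD (2*k) false = false := List.getD_eq_default _ _ (by omega)
    simp_all
  rw [← h1, aux_countP_range_card]
  apply congrArg
  apply Finset.filter_congr
  intro i _
  simp [bne_iff_ne]

theorem aux_ne_one {α : Type} [DecidableEq α] (A B : Finset α) (h : A.card = B.card)
    (Δ : Finset α) (hΔ : Δ = (A \ B) ∪ (B \ A)) : Δ.card ≠ 1 := by
  subst hΔ
  rw [Finset.card_union_of_disjoint disjoint_sdiff_sdiff, Finset.card_sdiff_comm h]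
  omega

theorem aux_mixed {α : Type} [DecidableEq α] (A B' : Finset α) (c : ℕ) (hA : A.card = c)
    (hB : B'.card = c+1) (Δ : Finset α) (hΔ : Δ = (A \ B') ∪ (B' \ A)) :
    Δ.card = 1 ↔ A ⊆ B' := by
  have hd : Disjoint (A \ B') (B' \ A) := disjoint_sdiff_sdiff
  have hu := Finset.card_union_of_disjoint hd
  have hle : B'.card - A.card ≤ (B' \ A).card := Finset.le_card_sdiff A B'
  constructor
  · intro h1
    rw [← Finset.sdiff_eq_empty_iff_subset, ← Finset.card_eq_zero]
    rw [hΔ] at h1; omega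
  · intro hsub
    have h0 : A \ B' = ∅ := Finset.sdiff_eq_empty_iff_subset.mpr hsub
    rw [hΔ, h0, Finset.empty_union, Finset.card_sdiff_of_subset hsub, hA, hB]
    omega

theorem aux_getD_compl {x : List Bool} {n : ℕ} (h : n < x.length) :
    (compl x).getD n false = !(x.getD n false) := by
  rw [List.getD_eq_getElem _ _ (by simpa [_root_.compl] using h),
    List.getD_eq_getElem _ _ h]
  simp [_root_.compl]

theorem aux_getD_true_lt {x : List Bool} {n : ℕ} (h : x.getD n false = true) : n < x.length := by
  by_contra hn
  rw [List.getD_eq_default _ _ (by omega)] at h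
  exact Bool.false_ne_true h

theorem aux_len_compl (x : List Bool) : (compl x).length = x.length := by
  simp [_root_.compl]

theorem aux_ne_compl_self {k : ℕ} {x : List Bool} (hk : 1 ≤ k) (hl : x.length = 2*k) :
    x ≠ compl x := by
  intro h
  have h0 : (0:ℕ) < x.length := by omega
  have := congrArg (fun l => l.getD 0 false) h
  rw [aux_getD_compl h0] at this
  exact (Bool.eq_not_self _).mp this

theorem aux_compl_disjoint {k : ℕ} {x y : List Bool} (hl : x.length = 2*k)
    (hxw : x.count true = k) (hyc : y = compl x) : Disjoint (fset k x) (fset k y) := by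
  have hyl : y.length = 2*k := by rw [hyc, aux_len_compl, hl]
  have hyw : y.count true = k := by rw [hyc, aux_count_compl, hl, hxw]; omega
  rw [Finset.disjoint_left]
  intro i hi hi'
  rw [aux_mem_fset_T hl hxw i] at hi
  rw [aux_mem_fset_T hyl hyw i] at hi'
  have hlt : i.val < x.length := aux_getD_true_lt hi
  rw [hyc, aux_getD_compl hlt, hi] at hi'
  exact Bool.false_ne_true hi'

theorem aux_disjoint_compl {k : ℕ} {x y : List Bool} (hxl : x.length = 2*k)
    (hyl : y.length = 2*k) (hxw : x.count true = k) (hyw : y.count true = k)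
    (hd : Disjoint (fset k x) (fset k y)) : y = compl x := by
  have hcardU : (fset k x ∪ fset k y).card = 2*k := by
    rw [Finset.card_union_of_disjoint hd, aux_fset_card ⟨hxl, Or.inl hxw⟩,
      aux_fset_card ⟨hyl, Or.inl hyw⟩]
    omega
  have hU : fset k x ∪ fset k y = Finset.univ \ {Fin.last (2*k)} := by
    apply Finset.eq_of_subset_of_card_le
    · intro i hi
      have hne : i ≠ Fin.last (2*k) := by
        rcases Finset.mem_union.mp hi with h | h
        · rw [aux_mem_fset_T hxl hxw i] at h
          have := aux_getD_true_lt h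
          intro hcon; rw [hcon] at this; simp [Fin.last] at this; omega
        · rw [aux_mem_fset_T hyl hyw i] at h
          have := aux_getD_true_lt h
          intro hcon; rw [hcon] at this; simp [Fin.last] at this; omega
      simp [hne]
    · rw [Finset.card_sdiff_of_subset (by simp), Finset.card_univ, Fintype.card_fin,
        Finset.card_singleton, hcardU]
      omega
  apply List.ext_getElem (by rw [hyl, aux_len_compl, hxl])
  intro n hn hn'
  have hnk : n < 2*k := by rw [hyl] at hn; exact hn
  set i : Fin (2*k+1) := ⟨n, by omega⟩ with hidef
  have hiU : i ∈ fset k x ∪ fset k y := by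
    rw [hU]
    simp [Fin.ext_iff, hidef, Fin.last]
    omega
  have hmemx := aux_mem_fset_T hxl hxw i
  have hmemy := aux_mem_fset_T hyl hyw i
  have hnotboth : ¬ (i ∈ fset k x ∧ i ∈ fset k y) := by
    intro ⟨h1, h2⟩; exact Finset.disjoint_left.mp hd h1 h2
  have hgx : x.getD n false = x[n]'(by omega) := List.getD_eq_getElem _ _ (by omega)
  have hgy : y.getD n false = y[n] := List.getD_eq_getElem _ _ hn
  have hgc : (compl x)[n]'hn' = !(x[n]'(by omega)) := by simp [_root_.compl]
  rcases Finset.mem_union.mp hiU with h | h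
  · have hx1 : x.getD n false = true := hmemx.mp h
    have hy0 : ¬ y.getD n false = true := fun hy1 => hnotboth ⟨h, hmemy.mpr hy1⟩
    rw [hgy] at hy0; rw [hgx] at hx1
    rw [hgc, hx1]
    simp at hy0 ⊢
    exact hy0
  · have hy1 : y.getD n false = true := hmemy.mp h
    have hx0 : ¬ x.getD n false = true := fun hx1 => hnotboth ⟨hmemx.mpr hx1, h⟩
    rw [hgy] at hy1; rw [hgx] at hx0
    rw [hgc, hy1]
    simp at hx0
    rw [hx0]
    rfl

theorem aux_fset_eq_T {k : ℕ} {x : List Bool} (hl : x.length = 2*k) (hw : x.count true = k) :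
    fset k x = Finset.univ.filter (fun i : Fin (2*k+1) => x.getD i.val false = true) :=
  Finset.ext fun i => by rw [aux_mem_fset_T hl hw i, Finset.mem_filter]; simp

theorem aux_fset_eq_F {k : ℕ} {x : List Bool} (hl : x.length = 2*k) (hw : x.count true = k+1) :
    fset k x = Finset.univ.filter (fun i : Fin (2*k+1) => x.getD i.val false = false) :=
  Finset.ext fun i => by rw [aux_mem_fset_F hl hw i, Finset.mem_filter]; simp

theorem aux_ne_of_disjoint {k : ℕ} (hk : 1 ≤ k) {x y : List Bool} (hx : inB k x)
    (hd : Disjoint (fset k x) (fset k y)) : fset k x ≠ fset k y := by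
  intro h
  rw [h] at hd
  have hemp : fset k y = ⊥ := disjoint_self.mp hd
  have := aux_fset_card hx
  rw [h, hemp] at this
  simp at this
  omega

/-- The mixed-weight case of the adjacency correspondence. -/
theorem aux_adj_mixed {k : ℕ} (hk : 1 ≤ k) {x y : List Bool}
    (hxl : x.length = 2*k) (hyl : y.length = 2*k)
    (hxw : x.count true = k) (hyw : y.count true = k+1) :
    (fset k x ≠ fset k y ∧ Disjoint (fset k x) (fset k y)) ↔
      ((x ≠ y) ∧
        (((List.range (2*k)).countP (fun i => x.getD i false != y.getD i false) = 1)
          ∨ (x.count true = k ∧ y = compl x)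
          ∨ (y.count true = k ∧ x = compl y))) := by
  set B' := Finset.univ.filter (fun i : Fin (2*k+1) => y.getD i.val false = true) with hB'
  have hA : fset k x = Finset.univ.filter (fun i : Fin (2*k+1) => x.getD i.val false = true) :=
    aux_fset_eq_T hxl hxw
  have hB : fset k y = Finset.univ.filter (fun i : Fin (2*k+1) => y.getD i.val false = false) :=
    aux_fset_eq_F hyl hyw
  have hcA : (fset k x).card = k := aux_fset_card ⟨hxl, Or.inl hxw⟩
  have hcB' : B'.card = k+1 := by rw [hB', aux_card_Tset y _ (by omega), hyw]
  have hdisj : Disjoint (fset k x) (fset k y) ↔ fset k x ⊆ B' := by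
    rw [Finset.disjoint_left]
    constructor
    · intro h i hi
      have hxi := (aux_mem_fset_T hxl hxw i).mp hi
      have : ¬ y.getD i.val false = false := fun hyf => h hi ((aux_mem_fset_F hyl hyw i).mpr hyf)
      rw [hB']; simp only [Finset.mem_filter, Finset.mem_univ, true_and]
      revert this; cases y.getD i.val false <;> simp
    · intro h i hi hi'
      have := h hi
      rw [hB'] at this; simp only [Finset.mem_filter, Finset.mem_univ, true_and] at this
      rw [aux_mem_fset_F hyl hyw i] at hi'
      rw [hi'] at this; exact Bool.false_ne_true this
  have hΔ : Finset.univ.filter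
      (fun i : Fin (2*k+1) => ¬ x.getD i.val false = y.getD i.val false)
      = (fset k x \ B') ∪ (B' \ fset k x) := by
    ext i
    rw [hA, hB']
    simp only [Finset.mem_filter, Finset.mem_union, Finset.mem_sdiff, Finset.mem_univ, true_and]
    cases hb : x.getD i.val false <;> cases hc : y.getD i.val false <;> simp
  have hcount : (List.range (2*k)).countP (fun i => x.getD i false != y.getD i false) = 1
      ↔ fset k x ⊆ B' := by
    rw [aux_diff_card hxl hyl, aux_mixed (fset k x) B' k hcA hcB' _ hΔ]
  have hne : fset k x ≠ fset k y := by
    intro h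
    have h1 : Fin.last (2*k) ∈ fset k y :=
      (aux_mem_fset_F hyl hyw _).mpr (List.getD_eq_default _ _ (by simp [Fin.last]; omega))
    rw [← h, aux_mem_fset_T hxl hxw _] at h1
    have := aux_getD_true_lt h1
    simp [Fin.last] at this
    omega
  have hxyne : x ≠ y := fun h => by rw [h, hyw] at hxw; omega
  constructor
  · rintro ⟨-, hd⟩
    exact ⟨hxyne, Or.inl (hcount.mpr (hdisj.mp hd))⟩
  · rintro ⟨-, h | h | h⟩
    · exact ⟨hne, hdisj.mpr (hcount.mp h)⟩
    · exfalso
      have := aux_count_compl x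
      rw [← h.2, hyw, hxl, hxw] at this
      omega
    · exact absurd h.1 (by omega)

theorem aux_countP_symm (m : ℕ) (x y : List Bool) :
    (List.range m).countP (fun i => x.getD i false != y.getD i false)
      = (List.range m).countP (fun i => y.getD i false != x.getD i false) := by
  apply List.countP_congr
  intro i _
  simp [bne, Bool.beq_comm]

/-- Full adjacency correspondence. -/
theorem aux_adj {k : ℕ} (hk : 1 ≤ k) {x y : List Bool} (hx : inB k x) (hy : inB k y) :
    (fset k x ≠ fset k y ∧ Disjoint (fset k x) (fset k y)) ↔
      ((x ≠ y) ∧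
        (((List.range (2*k)).countP (fun i => x.getD i false != y.getD i false) = 1)
          ∨ (x.count true = k ∧ y = compl x)
          ∨ (y.count true = k ∧ x = compl y))) := by
  obtain ⟨hxl, hxw | hxw⟩ := hx <;> obtain ⟨hyl, hyw | hyw⟩ := hy
  · -- both weight k
    constructor
    · rintro ⟨hne, hd⟩
      have hc := aux_disjoint_compl hxl hyl hxw hyw hd
      exact ⟨fun h => aux_ne_compl_self hk hxl (h.trans hc), Or.inr (Or.inl ⟨hxw, hc⟩)⟩
    · rintro ⟨hne, h | h | h⟩
      · exfalso
        have hΔ : Finset.univ.filter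
            (fun i : Fin (2*k+1) => ¬ x.getD i.val false = y.getD i.val false)
            = ((fset k x) \ (fset k y)) ∪ ((fset k y) \ (fset k x)) := by
          ext i
          rw [aux_fset_eq_T hxl hxw, aux_fset_eq_T hyl hyw]
          simp only [Finset.mem_filter, Finset.mem_union, Finset.mem_sdiff,
            Finset.mem_univ, true_and]
          cases hb : x.getD i.val false <;> cases hc : y.getD i.val false <;> simp
        have hcc : (fset k x).card = (fset k y).card := by
          rw [aux_fset_card ⟨hxl, Or.inl hxw⟩, aux_fset_card ⟨hyl, Or.inl hyw⟩]
        have := aux_ne_one (fset k x) (fset k y) hcc _ hΔ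
        rw [aux_diff_card hxl hyl] at h
        exact this h
      · have hd := aux_compl_disjoint hxl hxw h.2
        exact ⟨aux_ne_of_disjoint hk ⟨hxl, Or.inl hxw⟩ hd, hd⟩
      · have hd := (aux_compl_disjoint hyl hyw h.2).symm
        exact ⟨aux_ne_of_disjoint hk ⟨hxl, Or.inl hxw⟩ hd, hd⟩
  · -- x weight k, y weight k+1
    exact aux_adj_mixed hk hxl hyl hxw hyw
  · -- x weight k+1, y weight k
    have h1 := aux_adj_mixed hk hyl hxl hyw hxw
    constructor
    · rintro ⟨hne, hd⟩
      obtain ⟨hne', hco⟩ := h1.mp ⟨hne.symm, hd.symm⟩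
      refine ⟨hne'.symm, ?_⟩
      rcases hco with h | h | h
      · left; rw [aux_countP_symm]; exact h
      · right; right; exact h
      · right; left; exact h
    · rintro ⟨hne, hco⟩
      obtain ⟨hne', hd'⟩ := h1.mpr ⟨hne.symm, by
        rcases hco with h | h | h
        · exact Or.inl (by rw [aux_countP_symm]; exact h)
        · exact Or.inr (Or.inr h)
        · exact Or.inr (Or.inl h)⟩
      exact ⟨fun hh => hne' hh.symm, hd'.symm⟩
  · -- both weight k+1
    constructor
    · rintro ⟨hne, hd⟩
      exfalso
      have h1 : Fin.last (2*k) ∈ fset k x :=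
        (aux_mem_fset_F hxl hxw _).mpr (List.getD_eq_default _ _ (by simp [Fin.last]; omega))
      have h2 : Fin.last (2*k) ∈ fset k y :=
        (aux_mem_fset_F hyl hyw _).mpr (List.getD_eq_default _ _ (by simp [Fin.last]; omega))
      exact Finset.disjoint_left.mp hd h1 h2
    · rintro ⟨hne, h | h | h⟩
      · exfalso
        have hAx := aux_fset_eq_F hxl hxw
        have hAy := aux_fset_eq_F hyl hyw
        have hΔ : Finset.univ.filter
            (fun i : Fin (2*k+1) => ¬ x.getD i.val false = y.getD i.val false)
            = ((fset k x) \ (fset k y)) ∪ ((fset k y) \ (fset k x)) := by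
          ext i
          rw [hAx, hAy]
          simp only [Finset.mem_filter, Finset.mem_union, Finset.mem_sdiff,
            Finset.mem_univ, true_and]
          cases hb : x.getD i.val false <;> cases hc : y.getD i.val false <;> simp
        have hcc : (fset k x).card = (fset k y).card := by
          rw [aux_fset_card ⟨hxl, Or.inr hxw⟩, aux_fset_card ⟨hyl, Or.inr hyw⟩]
        have := aux_ne_one (fset k x) (fset k y) hcc _ hΔ
        rw [aux_diff_card hxl hyl] at h
        exact this h
      · exact absurd h.1 (by omega)
      · exact absurd h.1 (by omega)

theorem aux_ext {k : ℕ} {x y : List Bool} (hxl : x.length = 2*k) (hyl : y.length = 2*k)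
    (h : ∀ i : Fin (2*k+1), x.getD i.val false = y.getD i.val false) : x = y := by
  apply List.ext_getElem (hxl.trans hyl.symm)
  intro n hn hn'
  have hh := h ⟨n, by omega⟩
  rwa [List.getD_eq_getElem _ _ hn, List.getD_eq_getElem _ _ hn'] at hh

theorem aux_inj {k : ℕ} (hk : 1 ≤ k) {x y : List Bool} (hx : inB k x) (hy : inB k y)
    (h : fset k x = fset k y) : x = y := by
  obtain ⟨hxl, hxw | hxw⟩ := hx <;> obtain ⟨hyl, hyw | hyw⟩ := hy
  · apply aux_ext hxl hyl
    intro i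
    have := Finset.ext_iff.mp h i
    rw [aux_mem_fset_T hxl hxw i, aux_mem_fset_T hyl hyw i] at this
    cases hbx : x.getD i.val false <;> cases hby : y.getD i.val false <;> simp_all
  · exfalso
    have h2 : Fin.last (2*k) ∈ fset k y :=
      (aux_mem_fset_F hyl hyw _).mpr (List.getD_eq_default _ _ (by simp [Fin.last]; omega))
    rw [← h, aux_mem_fset_T hxl hxw _] at h2
    have := aux_getD_true_lt h2
    simp [Fin.last] at this; omega
  · exfalso
    have h2 : Fin.last (2*k) ∈ fset k x :=
      (aux_mem_fset_F hxl hxw _).mpr (List.getD_eq_default _ _ (by simp [Fin.last]; omega))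
    rw [h, aux_mem_fset_T hyl hyw _] at h2
    have := aux_getD_true_lt h2
    simp [Fin.last] at this; omega
  · apply aux_ext hxl hyl
    intro i
    have := Finset.ext_iff.mp h i
    rw [aux_mem_fset_F hxl hxw i, aux_mem_fset_F hyl hyw i] at this
    cases hbx : x.getD i.val false <;> cases hby : y.getD i.val false <;> simp_all

theorem aux_surj {k : ℕ} (hk : 1 ≤ k) (s : Finset (Fin (2*k+1))) (hs : s.card = k) :
    ∃ x, inB k x ∧ fset k x = s := by
  by_cases hlast : Fin.last (2*k) ∈ s
  · refine ⟨List.ofFn (fun i : Fin (2*k) => !(decide (i.castSucc ∈ s))), ?_, ?_⟩ <;>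
      set x := List.ofFn (fun i : Fin (2*k) => !(decide (i.castSucc ∈ s))) with hxdef
    all_goals {
      have hxl : x.length = 2*k := by simp [hxdef]
      have key : ∀ i : Fin (2*k+1), (x.getD i.val false = false ↔ i ∈ s) := by
        intro i
        rcases Nat.lt_or_ge i.val (2*k) with hi | hi
        · rw [List.getD_eq_getElem _ _ (by omega)]
          have : x[i.val]'(by omega) = !(decide ((⟨i.val, hi⟩ : Fin (2*k)).castSucc ∈ s)) := by
            simp [hxdef, List.getElem_ofFn]
          rw [this]
          have : (⟨i.val, hi⟩ : Fin (2*k)).castSucc = i := by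
            apply Fin.ext; simp
          rw [this]
          cases hd : decide (i ∈ s) <;> simp_all
        · have : i = Fin.last (2*k) := by apply Fin.ext; simp [Fin.last]; omega
          rw [List.getD_eq_default _ _ (by omega), this]
          simp [hlast]
      have hF : Finset.univ.filter (fun i : Fin (2*k+1) => x.getD i.val false = false) = s := by
        ext i; simp only [Finset.mem_filter, Finset.mem_univ, true_and]; exact key i
      have hw : x.count true = k+1 := by
        have h1 := aux_card_Fset x (2*k+1) (by omega)
        have h2 : x.count true ≤ x.length := List.count_le_length
        rw [hF, hs] at h1
        omega
      first
      | exact ⟨hxl, Or.inr hw⟩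
      | (rw [aux_fset_eq_F hxl hw]; exact hF)
    }
  · refine ⟨List.ofFn (fun i : Fin (2*k) => decide (i.castSucc ∈ s)), ?_, ?_⟩ <;>
      set x := List.ofFn (fun i : Fin (2*k) => decide (i.castSucc ∈ s)) with hxdef
    all_goals {
      have hxl : x.length = 2*k := by simp [hxdef]
      have key : ∀ i : Fin (2*k+1), (x.getD i.val false = true ↔ i ∈ s) := by
        intro i
        rcases Nat.lt_or_ge i.val (2*k) with hi | hi
        · rw [List.getD_eq_getElem _ _ (by omega)]
          have : x[i.val]'(by omega) = decide ((⟨i.val, hi⟩ : Fin (2*k)).castSucc ∈ s) := by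
            simp [hxdef, List.getElem_ofFn]
          rw [this]
          have : (⟨i.val, hi⟩ : Fin (2*k)).castSucc = i := by
            apply Fin.ext; simp
          rw [this]
          cases hd : decide (i ∈ s) <;> simp_all
        · have : i = Fin.last (2*k) := by apply Fin.ext; simp [Fin.last]; omega
          rw [List.getD_eq_default _ _ (by omega), this]
          simp [hlast]
      have hT : Finset.univ.filter (fun i : Fin (2*k+1) => x.getD i.val false = true) = s := by
        ext i; simp only [Finset.mem_filter, Finset.mem_univ, true_and]; exact key i
      have hw : x.count true = k := by
        have h1 := aux_card_Tset x (2*k+1) (by omega)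
        rw [hT, hs] at h1
        omega
      first
      | exact ⟨hxl, Or.inl hw⟩
      | (rw [aux_fset_eq_T hxl hw]; exact hT)
    }

theorem stmt_0 (k : ℕ) (hk : 1 ≤ k) :
    ∃ e : GkPlus k ≃g kneser (2*k+1) k,
      ∀ x : {x : List Bool // inB k x},
        ((e x : {s : Finset (Fin (2*k+1)) // s.card = k}) : Finset (Fin (2*k+1)))
          = if x.val.count true = k
              then charSet (2*k+1) (x.val ++ [false])
              else charSet (2*k+1) (compl x.val ++ [true]) := by
  classical
  let f : {x : List Bool // inB k x} → {s : Finset (Fin (2*k+1)) // s.card = k} :=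
    fun x => ⟨fset k x.val, aux_fset_card x.2⟩
  have hbij : Function.Bijective f := by
    constructor
    · intro a b h
      exact Subtype.ext (aux_inj hk a.2 b.2 (congrArg Subtype.val h))
    · intro s
      obtain ⟨x, hx, hfx⟩ := aux_surj hk s.1 s.2
      exact ⟨⟨x, hx⟩, Subtype.ext hfx⟩
  refine ⟨⟨Equiv.ofBijective f hbij, ?_⟩, fun x => rfl⟩
  intro a b
  show (kneser (2*k+1) k).Adj (f a) (f b) ↔ (GkPlus k).Adj a b
  have h1 : (f a ≠ f b) ↔ fset k a.val ≠ fset k b.val := by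
    constructor
    · intro h hh; exact h (Subtype.ext hh)
    · intro h hh; exact h (congrArg Subtype.val hh)
  have h2 : (a ≠ b) ↔ a.val ≠ b.val := by
    constructor
    · intro h hh; exact h (Subtype.ext hh)
    · intro h hh; exact h (congrArg Subtype.val hh)
  constructor
  · rintro (⟨hne, hd⟩ : _ ∧ _)
    obtain ⟨hxy, hco⟩ := (aux_adj hk a.2 b.2).mp ⟨h1.mp hne, hd⟩
    exact ⟨h2.mpr hxy, hco⟩
  · rintro (⟨hne, hco⟩ : _ ∧ _)
    obtain ⟨hne2, hd⟩ := (aux_adj hk a.2 b.2).mpr ⟨h2.mp hne, hco⟩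
    exact ⟨h1.mpr hne2, hd⟩
end

section
/- For every Dyck word x of length 2k, the sequence π(x) defined recursively by π(ε) = () and π(1u0v) = (|u|+2, (|u|+2) − π(ū^rev), 1, (|u|+2) + π(v)) for Dyck words u, v, is a permutation of the set {1,...,2k}. -/
/- ### Auxiliary lemmas -/

lemma not_injective' : Function.Injective (fun b : Bool => !b) := by decide

lemma count_map_not (l : List Bool) :
    (l.map (fun b => !b)).count true = l.count false ∧
    (l.map (fun b => !b)).count false = l.count true := by
  constructor
  · have := List.count_map_of_injective l (fun b : Bool => !b) not_injective' false
    simpa using this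
  · have := List.count_map_of_injective l (fun b : Bool => !b) not_injective' true
    simpa using this

lemma count_take_rev (l : List Bool) (n : ℕ) (b : Bool) :
    (l.reverse.take n).count b = (l.drop (l.length - n)).count b := by
  have h : (l.reverse.take n).reverse = l.drop (l.length - n) := by
    rw [List.reverse_take]
    simp
  rw [← h, List.count_reverse]

lemma count_tf (l : List Bool) : l.count true + l.count false = l.length := by
  induction l with
  | nil => simp
  | cons b t ih => cases b <;> simp [List.count_cons] <;> omega

lemma mirror_length (u : List Bool) : (mirror u).length = u.length := by simp [mirror]

lemma mirror_isDyck (u : List Bool) (h : isDyck u) : isDyck (mirror u) := by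
  obtain ⟨h1, h2⟩ := h
  constructor
  · unfold mirror
    rw [(count_map_not u.reverse).1, (count_map_not u.reverse).2,
      List.count_reverse, List.count_reverse, h1]
  · intro n
    unfold mirror
    rw [← List.map_take]
    rw [(count_map_not _).1, (count_map_not _).2]
    rw [count_take_rev, count_take_rev]
    set m := u.length - n
    have ht := h2 m
    have e1 : (u.take m).count true + (u.drop m).count true = u.count true := by
      rw [← List.count_append, List.take_append_drop]
    have e2 : (u.take m).count false + (u.drop m).count false = u.count false := by
      rw [← List.count_append, List.take_append_drop]
    omega

lemma count_take_succ_le (t : List Bool) (m : ℕ) (b : Bool) :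
    (t.take (m+1)).count b ≤ (t.take m).count b + 1 := by
  rcases lt_or_ge m t.length with h | h
  · rw [List.take_succ, List.getElem?_eq_getElem h, Option.toList_some, List.count_append]
    have h1 : List.count b [t[m]] ≤ 1 := by
      have := List.count_le_length (a := b) (l := [t[m]])
      simpa using this
    omega
  · rw [List.take_of_length_le h, List.take_of_length_le (by omega)]
    omega

lemma count_take_mono (t : List Bool) (m : ℕ) (b : Bool) :
    (t.take m).count b ≤ (t.take (m+1)).count b := by
  have hs : (t.take m).Sublist (t.take (m+1)) := by
    have : t.take m = (t.take (m+1)).take m := by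
      rw [List.take_take]; congr 1; omega
    rw [this]; exact List.take_sublist _ _
  exact hs.count_le b

lemma dyck_decomp (x : List Bool) (hx : isDyck x) (hne : x ≠ []) :
    ∃ u v, isDyck u ∧ isDyck v ∧ x = true :: u ++ false :: v := by
  obtain ⟨b, t, rfl⟩ := List.exists_cons_of_ne_nil hne
  have hb : b = true := by
    have h1 := hx.2 1
    cases b
    · simp [List.count_cons] at h1
    · rfl
  subst hb
  have hcount : t.count false = t.count true + 1 := by
    have := hx.1
    simp [List.count_cons] at this
    omega
  have hex : ∃ n, (t.take n).count false = (t.take n).count true + 1 :=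
    ⟨t.length, by simpa using hcount⟩
  set n₀ := Nat.find hex with hn₀def
  have hn₀ : (t.take n₀).count false = (t.take n₀).count true + 1 := Nat.find_spec hex
  have hn₀le : n₀ ≤ t.length := Nat.find_le (by simpa using hcount)
  have hn₀pos : 1 ≤ n₀ := by
    rcases Nat.eq_zero_or_pos n₀ with h | h
    · rw [h] at hn₀; simp at hn₀
    · exact h
  have key : ∀ m, m < n₀ → (t.take m).count false ≤ (t.take m).count true := by
    intro m
    induction m with
    | zero => simp
    | succ m ih =>
      intro hm
      have h1 := count_take_succ_le t m false
      have h2 := count_take_mono t m true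
      have h3 : ¬ ((t.take (m+1)).count false = (t.take (m+1)).count true + 1) :=
        Nat.find_min hex hm
      have h4 := ih (by omega)
      -- prefix counts never exceed
      have h5 : (t.take (m+1)).count false + (t.take (m+1)).count true
          = (t.take (m+1)).length := by have := count_tf (t.take (m+1)); omega
      have h6 : (t.take m).count false + (t.take m).count true
          = (t.take m).length := by have := count_tf (t.take m); omega
      have h7 : (t.take (m+1)).length ≤ (t.take m).length + 1 := by
        simp [List.length_take]; omega
      omega
  set m₀ := n₀ - 1 with hm₀def
  have hm₀lt : m₀ < t.length := by omega
  have htake : t.take n₀ = t.take m₀ ++ [t[m₀]] := by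
    have : n₀ = m₀ + 1 := by omega
    rw [this, List.take_succ, List.getElem?_eq_getElem hm₀lt]
    rfl
  have hkey := key m₀ (by omega)
  have hbit : t[m₀] = false ∧ (t.take m₀).count false = (t.take m₀).count true := by
    rw [htake] at hn₀
    cases hc : t[m₀] with
    | false =>
      rw [hc, List.count_append, List.count_append, List.count_singleton,
        List.count_singleton] at hn₀
      simp at hn₀
      exact ⟨rfl, by omega⟩
    | true =>
      rw [hc, List.count_append, List.count_append, List.count_singleton,
        List.count_singleton] at hn₀
      simp at hn₀
      omega
  refine ⟨t.take m₀, t.drop n₀, ?_, ?_, ?_⟩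
  · constructor
    · exact hbit.2.symm
    · intro m
      rw [List.take_take]
      exact key _ (by omega)
  · have hteq : t = t.take m₀ ++ false :: t.drop n₀ := by
      have hn₀eq : n₀ = m₀ + 1 := by omega
      conv_lhs => rw [← List.take_append_drop m₀ t]
      rw [hn₀eq, List.drop_eq_getElem_cons hm₀lt, hbit.1]
    constructor
    · have h1 : t.count true = (t.take m₀).count true + (t.drop n₀).count true := by
        conv_lhs => rw [hteq]
        simp [List.count_append, List.count_cons]
      have h2 : t.count false = (t.take m₀).count false + 1 + (t.drop n₀).count false := by
        conv_lhs => rw [hteq]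
        simp [List.count_append, List.count_cons]
        omega
      have := hbit.2
      omega
    · intro m
      have hx2 := hx.2 (n₀ + 1 + m)
      have hlentake : (t.take m₀).length = m₀ := by
        rw [List.length_take]; omega
      have heq : (true :: t).take (n₀ + 1 + m) =
          true :: (t.take m₀ ++ false :: (t.drop n₀).take m) := by
        have : (true :: t).take (n₀ + 1 + m) = true :: t.take (n₀ + m) := by
          have : n₀ + 1 + m = (n₀ + m) + 1 := by omega
          rw [this]; rfl
        rw [this]
        congr 1
        conv_lhs => rw [hteq]
        have hsum : n₀ + m = (t.take m₀).length + (m + 1) := by omega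
        rw [hsum, List.take_append, Nat.add_sub_cancel_left, List.take_succ_cons,
          List.take_of_length_le (by omega)]
      rw [heq] at hx2
      rw [List.count_cons, List.count_cons, List.count_append, List.count_append,
        List.count_cons, List.count_cons] at hx2
      simp at hx2
      have := hbit.2
      omega
  · have hteq : t = t.take m₀ ++ false :: t.drop n₀ := by
      have hn₀eq : n₀ = m₀ + 1 := by omega
      conv_lhs => rw [← List.take_append_drop m₀ t]
      rw [hn₀eq, List.drop_eq_getElem_cons hm₀lt, hbit.1]
    rw [List.cons_append, ← hteq]

lemma map_sub_range' (L : ℕ) :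
    (List.range' 1 L).map (fun a => L + 2 - a) = (List.range' 2 L).reverse := by
  rw [List.range'_eq_map_range, List.map_map, List.reverse_range']
  apply List.map_congr_left
  intro i _
  simp
  omega

lemma map_add_range' (L M : ℕ) :
    (List.range' 1 M).map (fun a => L + 2 + a) = List.range' (L + 3) M := by
  rw [List.range'_eq_map_range, List.map_map, List.range'_eq_map_range]
  apply List.map_congr_left
  intro i _
  simp
  omega

lemma pi_perm (π : List Bool → List ℕ) (hπ : IsPiFun π) :
    ∀ n (x : List Bool), x.length = n → isDyck x →
      (π x).Perm (List.range' 1 x.length) := by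
  intro n
  induction n using Nat.strong_induction_on with
  | _ n ih =>
    intro x hlen hx
    rcases eq_or_ne x [] with rfl | hne
    · simp [hπ.1]
    · obtain ⟨u, v, hu, hv, rfl⟩ := dyck_decomp x hx hne
      have hL : (true :: u ++ false :: v).length = u.length + v.length + 2 := by
        simp; omega
      set L := u.length with hLdef
      set M := v.length with hMdef
      have hulen : L < n := by omega
      have hvlen : M < n := by omega
      have hA : (π (mirror u)).Perm (List.range' 1 L) := by
        have := ih L hulen (mirror u) (mirror_length u) (mirror_isDyck u hu)
        rwa [mirror_length] at this
      have hB : (π v).Perm (List.range' 1 M) := ih M hvlen v rfl hv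
      rw [hπ.2 u v hu hv, ← hLdef, hL]
      have hA' : ((π (mirror u)).map (fun a => L + 2 - a)).Perm (List.range' 2 L) := by
        refine (hA.map _).trans ?_
        rw [map_sub_range']
        exact List.reverse_perm _
      have hB' : ((π v).map (fun a => L + 2 + a)).Perm (List.range' (L + 3) M) := by
        refine (hB.map _).trans ?_
        rw [map_add_range' L M]
      have htarget : List.range' 1 (L + M + 2) =
          (1 :: (List.range' 2 L ++ [L + 2])) ++ List.range' (L + 3) M := by
        have h1 : List.range' 1 (L + 2) ++ List.range' (L + 3) M
            = List.range' 1 (M + (L + 2)) := by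
          have h := List.range'_append (s := 1) (m := L + 2) (n := M) (step := 1)
          rw [show 1 + 1 * (L + 2) = L + 3 by ring, Nat.add_comm (L + 2) M] at h
          exact h
        have h2 : List.range' 1 (L + 2) = 1 :: List.range' 2 (L + 1) := by
          rw [List.range'_succ]
        have h3 : List.range' 2 (L + 1) = List.range' 2 L ++ [2 + L] := by
          have h := List.range'_concat (step := 1) (s := 2) (n := L)
          rw [show 2 + 1 * L = 2 + L by ring] at h
          exact h
        have h4 : L + M + 2 = M + (L + 2) := by omega
        rw [h4, ← h1, h2, h3]
        simp
        omega
      rw [htarget]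
      rw [← Multiset.coe_eq_coe] at hA' hB' ⊢
      rw [show (((L + 2) :: List.map (fun a => L + 2 - a) (π (mirror u)) ++
            1 :: List.map (fun a => L + 2 + a) (π v) : List ℕ) : Multiset ℕ)
          = {L + 2} + ↑(List.map (fun a => L + 2 - a) (π (mirror u))) + {1}
            + ↑(List.map (fun a => L + 2 + a) (π v)) from by
          simp [← Multiset.coe_add, ← Multiset.cons_coe, ← Multiset.singleton_add]
          abel]
      rw [show (((1 :: (List.range' 2 L ++ [L + 2])) ++ List.range' (L + 3) M :
            List ℕ) : Multiset ℕ)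
          = {1} + ↑(List.range' 2 L) + {L + 2} + ↑(List.range' (L + 3) M) from by
          simp [← Multiset.coe_add, ← Multiset.cons_coe, ← Multiset.singleton_add]
          abel]
      rw [hA', hB']
      abel

theorem stmt_4 (π : List Bool → List ℕ) (hπ : IsPiFun π) (k : ℕ) (x : List Bool)
    (hx : isDyck x) (hl : x.length = 2*k) :
    (π x).Perm (List.range' 1 (2*k)) := by
  have := pi_perm π hπ x.length x rfl hx
  rwa [hl] at this
end

section
/- For every k ≥ 1, the paths P(x) for x ranging over all Dyck words of length 2k are mutually vertex-disjoint, and their vertex sets together cover all bitstrings of length 2k with weight k or k+1. Equivalently: for every bitstring y of length 2k and weight k or k+1, there is exactly one pair (x,i) with x a Dyck word of length 2k and 0 ≤ i ≤ 2k such that y = x_i in P(x) = (x_0,...,x_{2k}). -/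
namespace Aux

def bal (x : List Bool) : ℤ := (x.count true : ℤ) - (x.count false : ℤ)

@[simp] lemma bal_nil : bal [] = 0 := rfl

@[simp] lemma bal_cons (b : Bool) (x : List Bool) :
    bal (b :: x) = (if b then 1 else -1) + bal x := by
  cases b <;> simp [bal, List.count_cons] <;> ring

@[simp] lemma bal_append (s t : List Bool) : bal (s ++ t) = bal s + bal t := by
  simp [bal, List.count_append]; ring

lemma count_add_count (x : List Bool) : x.count true + x.count false = x.length := by
  induction x with
  | nil => rfl
  | cons b t ih =>
    cases b <;> simp only [List.count_cons, List.length_cons] <;> simp <;> omega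

lemma two_count_true (x : List Bool) : 2 * (x.count true : ℤ) = x.length + bal x := by
  have h := count_add_count x
  have h' : (x.count true : ℤ) + x.count false = x.length := by exact_mod_cast h
  simp only [bal]; linarith

lemma two_count_false (x : List Bool) : 2 * (x.count false : ℤ) = x.length - bal x := by
  have h := count_add_count x
  have h' : (x.count true : ℤ) + x.count false = x.length := by exact_mod_cast h
  simp only [bal]; linarith

@[simp] lemma bal_reverse (x : List Bool) : bal x.reverse = bal x := by
  simp [bal, List.count_reverse]

@[simp] lemma length_compl (x : List Bool) : (compl x).length = x.length := by simp [_root_.compl]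

@[simp] lemma length_mirror (x : List Bool) : (mirror x).length = x.length := by simp [mirror]

@[simp] lemma bal_compl (x : List Bool) : bal (compl x) = - bal x := by
  induction x with
  | nil => rfl
  | cons b t ih =>
    have : compl (b :: t) = (!b) :: compl t := rfl
    rw [this, bal_cons, bal_cons, ih]; cases b <;> simp <;> ring

@[simp] lemma compl_append (s t : List Bool) : compl (s ++ t) = compl s ++ compl t := by
  simp [_root_.compl]

@[simp] lemma compl_compl (x : List Bool) : compl (compl x) = x := by
  simp only [_root_.compl, List.map_map]
  simp [Function.comp_def]

@[simp] lemma mirror_mirror (x : List Bool) : mirror (mirror x) = x := by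
  simp only [mirror, List.map_reverse, List.reverse_reverse, List.map_map]
  simp [Function.comp_def]

lemma mirror_eq_compl_reverse (x : List Bool) : mirror x = compl x.reverse := rfl

lemma mirror_eq_reverse_compl (x : List Bool) : mirror x = (compl x).reverse := by
  simp only [mirror, _root_.compl, List.map_reverse]

@[simp] lemma bal_mirror (x : List Bool) : bal (mirror x) = - bal x := by
  rw [mirror_eq_compl_reverse, bal_compl, bal_reverse]

lemma mirror_compl (x : List Bool) : mirror (compl x) = compl (mirror x) := by
  simp only [mirror_eq_compl_reverse, _root_.compl, List.map_reverse]

lemma mirror_compl_mirror (u : List Bool) : mirror (compl (mirror u)) = compl u := by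
  rw [mirror_compl, mirror_mirror]


lemma isDyck_iff (x : List Bool) : isDyck x ↔ bal x = 0 ∧ ∀ n, 0 ≤ bal (x.take n) := by
  constructor
  · rintro ⟨h1, h2⟩
    refine ⟨by simp [bal, h1], fun n => ?_⟩
    have := h2 n
    simp only [bal, sub_nonneg]
    exact_mod_cast this
  · rintro ⟨h1, h2⟩
    constructor
    · have : (x.count true : ℤ) = x.count false := by
        have := h1; simp only [bal] at this; linarith
      exact_mod_cast this
    · intro n
      have := h2 n
      simp only [bal, sub_nonneg] at this
      exact_mod_cast this

lemma bal_take_add_drop (x : List Bool) (n : ℕ) : bal (x.take n) + bal (x.drop n) = bal x := by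
  conv_rhs => rw [← List.take_append_drop n x]
  rw [bal_append]

lemma isDyck_iff_drop (x : List Bool) : isDyck x ↔ bal x = 0 ∧ ∀ n, bal (x.drop n) ≤ 0 := by
  rw [isDyck_iff]
  constructor
  · rintro ⟨h1, h2⟩
    exact ⟨h1, fun n => by have := bal_take_add_drop x n; have := h2 n; linarith⟩
  · rintro ⟨h1, h2⟩
    exact ⟨h1, fun n => by have := bal_take_add_drop x n; have := h2 n; linarith⟩

lemma isDyck_nil : isDyck [] := ⟨rfl, fun n => by simp⟩

lemma dyck_bal {x : List Bool} (h : isDyck x) : bal x = 0 := ((isDyck_iff x).1 h).1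

lemma dyck_take {x : List Bool} (h : isDyck x) (n : ℕ) : 0 ≤ bal (x.take n) :=
  ((isDyck_iff x).1 h).2 n

lemma dyck_drop {x : List Bool} (h : isDyck x) (n : ℕ) : bal (x.drop n) ≤ 0 :=
  ((isDyck_iff_drop x).1 h).2 n

lemma isDyck_mirror {x : List Bool} (h : isDyck x) : isDyck (mirror x) := by
  rw [isDyck_iff]
  refine ⟨by simp [dyck_bal h], fun n => ?_⟩
  have hmt : (mirror x).take n = mirror (x.drop (x.length - n)) := by
    simp only [mirror]
    rw [← List.map_take, List.take_reverse]
  rw [hmt, bal_mirror]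
  have := dyck_drop h (x.length - n)
  linarith

lemma dyck_head {b : Bool} {t : List Bool} (h : isDyck (b :: t)) : b = true := by
  have h1 := dyck_take h 1
  cases b
  · exfalso
    simp only [List.take_succ_cons, List.take_zero, bal_cons, bal_nil] at h1
    norm_num at h1
  · rfl

lemma bal_take_false_cons {v : List Bool} (hv : isDyck v) (r : ℕ) :
    -1 ≤ bal ((false :: v).take r) := by
  cases r with
  | zero => simp
  | succ s =>
    rw [List.take_succ_cons, bal_cons]
    have := dyck_take hv s
    norm_num
    linarith

lemma isDyck_compose {u v : List Bool} (hu : isDyck u) (hv : isDyck v) :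
    isDyck (true :: u ++ false :: v) := by
  rw [isDyck_iff]
  constructor
  · simp only [List.cons_append, bal_cons, bal_append, dyck_bal hu, dyck_bal hv]
    norm_num
  · intro n
    cases n with
    | zero => simp
    | succ m =>
      rw [List.cons_append, List.take_succ_cons, bal_cons, List.take_append,
        bal_append]
      have h1 := dyck_take hu m
      have h2 := bal_take_false_cons hv (m - u.length)
      norm_num
      linarith

lemma bal_take_succ (y : List Bool) (n : ℕ) (hn : n < y.length) :
    bal (y.take (n + 1)) = bal (y.take n) + (if y[n] then 1 else -1) := by
  rw [List.take_succ, List.getElem?_eq_getElem hn]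
  cases h : y[n] <;> simp [bal_append, h]

/-- First-return decomposition of a nonempty Dyck word. -/
lemma dyck_decomp {x : List Bool} (h : isDyck x) (hne : x ≠ []) :
    ∃ u v, isDyck u ∧ isDyck v ∧ x = true :: u ++ false :: v := by
  obtain ⟨b, t, rfl⟩ : ∃ b t, x = b :: t := by
    cases x with
    | nil => exact absurd rfl hne
    | cons b t => exact ⟨b, t, rfl⟩
  have hb : b = true := dyck_head h
  subst hb
  have hxlen : (true :: t).length = t.length + 1 := rfl
  have hx : ∃ n, 1 ≤ n ∧ bal ((true :: t).take n) = 0 :=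
    ⟨(true :: t).length, by rw [hxlen]; omega, by rw [List.take_length]; exact dyck_bal h⟩
  classical
  obtain ⟨r, hr1, hr0, hmin0, hrle⟩ :
      ∃ r, 1 ≤ r ∧ bal ((true :: t).take r) = 0 ∧
        (∀ m, m < r → ¬(1 ≤ m ∧ bal ((true :: t).take m) = 0)) ∧ r ≤ t.length + 1 := by
    refine ⟨Nat.find hx, (Nat.find_spec hx).1, (Nat.find_spec hx).2,
      fun m hm => Nat.find_min hx hm, ?_⟩
    have h0 : Nat.find hx ≤ (true :: t).length :=
      Nat.find_le ⟨(by rw [hxlen]; omega : 1 ≤ (true :: t).length),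
        by rw [List.take_length]; exact dyck_bal h⟩
    rw [hxlen] at h0
    exact h0
  have hmin : ∀ m, 1 ≤ m → m < r → 1 ≤ bal ((true :: t).take m) := by
    intro m hm1 hm2
    have hne1 := hmin0 m hm2
    have hge := dyck_take h m
    by_contra hc
    exact hne1 ⟨hm1, by omega⟩
  have hr2 : 2 ≤ r := by
    by_contra hc
    have : r = 1 := by omega
    subst this
    simp only [List.take_succ_cons, List.take_zero, bal_cons, bal_nil] at hr0
    norm_num at hr0
  have hprev : 1 ≤ bal ((true :: t).take (r - 1)) := hmin (r-1) (by omega) (by omega)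
  have hstep := bal_take_succ (true :: t) (r - 1) (by rw [hxlen]; omega)
  rw [Nat.sub_add_cancel (by omega : 1 ≤ r)] at hstep
  have hget : (true :: t)[r - 1]'(by rw [hxlen]; omega) = false := by
    by_contra hc
    rw [Bool.not_eq_false] at hc
    rw [hr0, hc] at hstep
    norm_num at hstep
    omega
  have hprev1 : bal ((true :: t).take (r - 1)) = 1 := by
    rw [hr0, hget] at hstep
    norm_num at hstep
    omega
  have htake : ∀ m, bal (t.take m) = bal ((true :: t).take (m + 1)) - 1 := by
    intro m
    rw [List.take_succ_cons, bal_cons]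
    norm_num
  have htlen : r - 2 < t.length := by omega
  have htget : t[r - 2]'htlen = false := by
    have : (true :: t)[r - 1]'(by rw [hxlen]; omega) = t[r-2]'htlen := by
      have hco : r - 1 = (r - 2) + 1 := by omega
      simp only [hco, List.getElem_cons_succ]
    rw [← this, hget]
  refine ⟨t.take (r - 2), t.drop (r - 1), ?_, ?_, ?_⟩
  · rw [isDyck_iff]
    have key : ∀ m, m ≤ r - 2 → 0 ≤ bal (t.take m) ∧ (m = r - 2 → bal (t.take m) = 0) := by
      intro m hm
      rw [htake m]
      constructor
      · have := hmin (m + 1) (by omega) (by omega)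
        linarith
      · intro hme
        subst hme
        have hco : r - 2 + 1 = r - 1 := by omega
        rw [hco]
        omega
    constructor
    · exact (key (r-2) le_rfl).2 rfl
    · intro n
      rw [List.take_take]
      rcases le_or_gt n (r-2) with hn | hn
      · rw [min_eq_left hn]; exact (key n hn).1
      · rw [min_eq_right (by omega)]; exact (key (r-2) le_rfl).1
  · rw [isDyck_iff_drop]
    have hveq : t.drop (r - 1) = (true :: t).drop r := by
      conv_rhs => rw [show r = (r-1)+1 by omega, List.drop_succ_cons]
    constructor
    · rw [hveq]
      have h0 := bal_take_add_drop (true :: t) r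
      rw [hr0, dyck_bal h] at h0
      omega
    · intro n
      rw [hveq, List.drop_drop]
      first
      | exact dyck_drop h (n + r)
      | exact dyck_drop h (r + n)
  · have ht : t = t.take (r - 2) ++ (false :: t.drop (r - 1)) := by
      conv_lhs => rw [← List.take_append_drop (r - 2) t]
      congr 1
      rw [List.drop_eq_getElem_cons htlen, htget]
      congr 2
      omega
    conv_lhs => rw [ht]
    rw [List.cons_append]


section FlipBit

@[simp] lemma length_flipBit (y : List Bool) (a : ℕ) : (flipBit y a).length = y.length := by
  simp [flipBit]

lemma flipBit_cons_succ (b : Bool) (y : List Bool) (a : ℕ) (ha : 1 ≤ a) :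
    flipBit (b :: y) (a + 1) = b :: flipBit y a := by
  obtain ⟨m, rfl⟩ : ∃ m, a = m + 1 := ⟨a - 1, by omega⟩
  simp only [flipBit, Nat.add_sub_cancel, List.set_cons_succ, List.getD_cons_succ]

@[simp] lemma flipBit_one (b : Bool) (y : List Bool) : flipBit (b :: y) 1 = (!b) :: y := by
  simp [flipBit]

lemma flipBit_append_left (s t : List Bool) (a : ℕ) (ha : 1 ≤ a) (ha2 : a ≤ s.length) :
    flipBit (s ++ t) a = flipBit s a ++ t := by
  have hlt : a - 1 < s.length := by omega
  simp only [flipBit, List.set_append, if_pos hlt, List.getD_append _ _ _ _ hlt]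

lemma flipBit_append_right (s t : List Bool) (a : ℕ) (ha : 1 ≤ a) :
    flipBit (s ++ t) (s.length + a) = s ++ flipBit t a := by
  have h1 : s.length + a - 1 = s.length + (a - 1) := by omega
  have hg : (s ++ t).getD (s.length + (a - 1)) false = t.getD (a - 1) false := by
    rw [List.getD_append_right s t false (s.length + (a - 1)) (by omega)]
    congr 1
    omega
  have h2 : s.length + (a - 1) - s.length = a - 1 := by omega
  rw [flipBit, h1, hg, List.set_append,
    if_neg (by omega : ¬ s.length + (a - 1) < s.length), h2]
  rfl

lemma reverse_set (l : List Bool) (i : ℕ) (a : Bool) (hi : i < l.length) :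
    (l.set i a).reverse = l.reverse.set (l.length - 1 - i) a := by
  apply List.ext_getElem
  · simp
  · intro j h1 h2
    have hj : j < l.length := by simpa using h1
    simp only [List.getElem_reverse, List.getElem_set, List.length_set, List.length_reverse]
    by_cases h : l.length - 1 - i = j
    · rw [if_pos (by omega), if_pos h]
    · rw [if_neg (by omega), if_neg h]

lemma getD_reverse (l : List Bool) (i : ℕ) (hi : i < l.length) :
    l.reverse.getD (l.length - 1 - i) false = l.getD i false := by
  rw [List.getD_eq_getElem _ _ (by simp; omega), List.getD_eq_getElem _ _ hi,
    List.getElem_reverse]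
  have h4 : l.length - 1 - (l.length - 1 - i) = i := by omega
  simp only [h4]

lemma flipBit_mirror (y : List Bool) (a : ℕ) (ha : 1 ≤ a) (ha2 : a ≤ y.length) :
    flipBit (mirror y) (y.length + 1 - a) = mirror (flipBit y a) := by
  have h2 : a - 1 < y.length := by omega
  have h1 : y.length + 1 - a - 1 = y.length - 1 - (a - 1) := by omega
  have hval : (mirror y).getD (y.length - 1 - (a - 1)) false = !(y.getD (a - 1) false) := by
    have hidx : y.length - 1 - (a - 1) < y.reverse.length := by simp; omega
    rw [mirror, List.getD_eq_getElem _ _ (by simpa using hidx), List.getElem_map,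
      ← List.getD_eq_getElem y.reverse false hidx, getD_reverse _ _ h2]
  rw [flipBit, flipBit, h1, hval, mirror, mirror, reverse_set _ _ _ h2, List.map_set]
  try simp

end FlipBit

section Scanl

variable {α β : Type*}

lemma scanl_append_cons (f : β → α → β) (l₁ : List α) (a : α) (l₂ : List α) :
    ∀ x, List.scanl f x (l₁ ++ a :: l₂)
      = List.scanl f x l₁ ++ List.scanl f (f (List.foldl f x l₁) a) l₂ := by
  induction l₁ with
  | nil => intro x; simp [List.scanl_cons]
  | cons b l₁ ih =>
    intro x
    rw [List.cons_append, List.scanl_cons, ih (f x b), List.scanl_cons]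
    simp [List.foldl_cons]

lemma scanl_map_inv (f : β → α → β) (g : β → β) (φ : α → α) (Q : β → Prop) (l : List α)
    (hcomm : ∀ z a, Q z → a ∈ l → f (g z) (φ a) = g (f z a))
    (hQ : ∀ z a, Q z → a ∈ l → Q (f z a)) :
    ∀ x, Q x → List.scanl f (g x) (l.map φ) = (List.scanl f x l).map g := by
  induction l with
  | nil => intro x hx; simp
  | cons a l ih =>
    intro x hx
    rw [List.map_cons, List.scanl_cons, List.scanl_cons, List.map_cons]
    congr 1
    rw [hcomm x a hx (by simp)]
    exact ih (fun z b hz hb => hcomm z b hz (by simp [hb]))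
      (fun z b hz hb => hQ z b hz (by simp [hb])) (f x a) (hQ x a hx (by simp))

lemma foldl_map_inv (f : β → α → β) (g : β → β) (φ : α → α) (Q : β → Prop) (l : List α)
    (hcomm : ∀ z a, Q z → a ∈ l → f (g z) (φ a) = g (f z a))
    (hQ : ∀ z a, Q z → a ∈ l → Q (f z a)) :
    ∀ x, Q x → List.foldl f (g x) (l.map φ) = g (List.foldl f x l) := by
  induction l with
  | nil => intro x hx; simp
  | cons a l ih =>
    intro x hx
    rw [List.map_cons, List.foldl_cons, List.foldl_cons, hcomm x a hx (by simp)]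
    exact ih (fun z b hz hb => hcomm z b hz (by simp [hb]))
      (fun z b hz hb => hQ z b hz (by simp [hb])) (f x a) (hQ x a hx (by simp))

lemma scanl_getD_zero (f : β → α → β) (x : β) (l : List α) (d : β) :
    (List.scanl f x l).getD 0 d = x := by
  cases l <;> simp [List.scanl_cons]

end Scanl


section Pi

variable {π : List Bool → List ℕ} (hπ : IsPiFun π)

lemma decomp_length {u v : List Bool} :
    (true :: u ++ false :: v).length = u.length + v.length + 2 := by
  simp
  omega

include hπ

lemma pi_len : ∀ N x, x.length ≤ N → isDyck x → (π x).length = x.length := by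
  intro N
  induction N with
  | zero =>
    intro x hx _
    have : x = [] := List.length_eq_zero_iff.1 (by omega)
    subst this
    rw [hπ.1]
    rfl
  | succ N ih =>
    intro x hx hd
    rcases eq_or_ne x [] with rfl | hne
    · rw [hπ.1]
      rfl
    · obtain ⟨u, v, hu, hv, rfl⟩ := dyck_decomp hd hne
      rw [decomp_length] at hx ⊢
      rw [hπ.2 u v hu hv]
      have h1 := ih (mirror u) (by simp; omega) (isDyck_mirror hu)
      have h2 := ih v (by omega) hv
      simp [h1, h2]
      omega

lemma pi_bounds : ∀ N x, x.length ≤ N → isDyck x → ∀ a ∈ π x, 1 ≤ a ∧ a ≤ x.length := by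
  intro N
  induction N with
  | zero =>
    intro x hx _ a ha
    have : x = [] := List.length_eq_zero_iff.1 (by omega)
    subst this
    rw [hπ.1] at ha
    simp at ha
  | succ N ih =>
    intro x hx hd a ha
    rcases eq_or_ne x [] with rfl | hne
    · rw [hπ.1] at ha; simp at ha
    · obtain ⟨u, v, hu, hv, rfl⟩ := dyck_decomp hd hne
      rw [decomp_length] at hx ⊢
      rw [hπ.2 u v hu hv] at ha
      simp only [List.mem_cons, List.mem_append, List.mem_map] at ha
      rcases ha with (rfl | ⟨b, hb, rfl⟩) | (rfl | ⟨b, hb, rfl⟩)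
      · omega
      · have := ih (mirror u) (by simp; omega) (isDyck_mirror hu) b hb
        simp at this
        omega
      · omega
      · have := ih v (by omega) hv b hb
        omega

lemma path_last : ∀ N x, x.length ≤ N → isDyck x → List.foldl flipBit x (π x) = compl x := by
  intro N
  induction N with
  | zero =>
    intro x hx _
    have : x = [] := List.length_eq_zero_iff.1 (by omega)
    subst this
    rw [hπ.1]
    rfl
  | succ N ih =>
    intro x hx hd
    rcases eq_or_ne x [] with rfl | hne
    · rw [hπ.1]; rfl
    · obtain ⟨u, v, hu, hv, rfl⟩ := dyck_decomp hd hne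
      rw [decomp_length] at hx
      rw [hπ.2 u v hu hv, List.foldl_append]
      -- step 1 : flip position u.length + 2
      have hstep1 : flipBit (true :: u ++ false :: v) (u.length + 2)
          = true :: (u ++ true :: v) := by
        have h1 : u.length + 2 = (true :: u).length + 1 := by simp
        rw [List.cons_append, ← List.cons_append, h1,
          flipBit_append_right (true :: u) (false :: v) 1 le_rfl]
        simp
      have hcomm1 : ∀ z b, z.length = u.length → b ∈ π (mirror u) →
          flipBit (true :: (mirror z ++ true :: v)) (u.length + 2 - b)
            = true :: (mirror (flipBit z b) ++ true :: v) := by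
        intro z b hz hb
        have hbb := pi_bounds hπ (mirror u).length (mirror u) le_rfl (isDyck_mirror hu) b hb
        simp only [length_mirror] at hbb
        have h1 : u.length + 2 - b = (u.length + 1 - b) + 1 := by omega
        rw [h1, flipBit_cons_succ _ _ _ (by omega)]
        congr 1
        rw [flipBit_append_left _ _ _ (by omega) (by simp [hz]; omega)]
        congr 1
        have h2 : u.length + 1 - b = z.length + 1 - b := by omega
        rw [h2, flipBit_mirror z b (by omega) (by omega)]
      have hfold1 : List.foldl flipBit (true :: (mirror (mirror u) ++ true :: v))
            ((π (mirror u)).map (fun a => u.length + 2 - a))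
          = true :: (mirror (List.foldl flipBit (mirror u) (π (mirror u))) ++ true :: v) := by
        exact foldl_map_inv flipBit
          (fun w => true :: (mirror w ++ true :: v)) (fun a => u.length + 2 - a)
          (fun z => z.length = u.length) (π (mirror u))
          (fun z b hz hb => hcomm1 z b hz hb)
          (fun z b hz hb => by simp [hz])
          (mirror u) (by simp)
      have hA : List.foldl flipBit (true :: u ++ false :: v)
          ((u.length + 2) :: (π (mirror u)).map (fun a => u.length + 2 - a))
          = true :: (compl u ++ true :: v) := by
        rw [List.foldl_cons, hstep1]
        have hg1 : true :: (u ++ true :: v)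
            = true :: (mirror (mirror u) ++ true :: v) := by rw [mirror_mirror]
        rw [hg1, hfold1, ih (mirror u) (by simp; omega) (isDyck_mirror hu), mirror_compl_mirror]
      rw [hA, List.foldl_cons, flipBit_one]
      have hg2 : (!true) :: (compl u ++ true :: v)
          = (false :: compl u ++ [true]) ++ v := by simp
      rw [hg2]
      have hcomm2 : ∀ z b, b ∈ π v →
          flipBit ((false :: compl u ++ [true]) ++ z) (u.length + 2 + b)
            = (false :: compl u ++ [true]) ++ flipBit z b := by
        intro z b hb
        have hbb := pi_bounds hπ v.length v le_rfl hv b hb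
        have h1 : u.length + 2 + b = (false :: compl u ++ [true]).length + b := by
          simp
        rw [h1, flipBit_append_right _ _ _ (by omega)]
      have hfold2 : List.foldl flipBit ((false :: compl u ++ [true]) ++ v)
            ((π v).map (fun a => u.length + 2 + a))
          = (false :: compl u ++ [true]) ++ List.foldl flipBit v (π v) := by
        exact foldl_map_inv flipBit
          (fun w => (false :: compl u ++ [true]) ++ w) (fun a => u.length + 2 + a)
          (fun _ => True) (π v)
          (fun z b _ hb => hcomm2 z b hb)
          (fun _ _ _ _ => trivial)
          v trivial
      rw [hfold2, ih v (by omega) hv]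
      simp [_root_.compl]


lemma path_len (x : List Bool) (hd : isDyck x) : (pathOf π x).length = x.length + 1 := by
  rw [pathOf, List.length_scanl, pi_len hπ x.length x le_rfl hd]

omit hπ in
lemma path_getD_zero (x : List Bool) : (pathOf π x).getD 0 [] = x :=
  scanl_getD_zero _ _ _ _

lemma path_struct {u v : List Bool} (hu : isDyck u) (hv : isDyck v) :
    pathOf π (true :: u ++ false :: v)
      = (true :: u ++ false :: v) ::
          ((pathOf π (mirror u)).map (fun w => true :: (mirror w ++ true :: v))
            ++ (pathOf π v).map (fun w => (false :: compl u ++ [true]) ++ w)) := by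
  rw [pathOf, hπ.2 u v hu hv, scanl_append_cons]
  have hstep1 : flipBit (true :: u ++ false :: v) (u.length + 2)
      = true :: (u ++ true :: v) := by
    have h1 : u.length + 2 = (true :: u).length + 1 := by simp
    rw [List.cons_append, ← List.cons_append, h1,
      flipBit_append_right (true :: u) (false :: v) 1 le_rfl]
    simp
  have hcomm1 : ∀ z b, z.length = u.length → b ∈ π (mirror u) →
      flipBit (true :: (mirror z ++ true :: v)) (u.length + 2 - b)
        = true :: (mirror (flipBit z b) ++ true :: v) := by
    intro z b hz hb
    have hbb := pi_bounds hπ (mirror u).length (mirror u) le_rfl (isDyck_mirror hu) b hb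
    simp only [length_mirror] at hbb
    have h1 : u.length + 2 - b = (u.length + 1 - b) + 1 := by omega
    rw [h1, flipBit_cons_succ _ _ _ (by omega)]
    congr 1
    rw [flipBit_append_left _ _ _ (by omega) (by simp [hz]; omega)]
    congr 1
    have h2 : u.length + 1 - b = z.length + 1 - b := by omega
    rw [h2, flipBit_mirror z b (by omega) (by omega)]
  have hscanl1 : List.scanl flipBit (true :: u ++ false :: v)
        ((u.length + 2) :: (π (mirror u)).map (fun a => u.length + 2 - a))
      = (true :: u ++ false :: v) ::
          (pathOf π (mirror u)).map (fun w => true :: (mirror w ++ true :: v)) := by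
    rw [List.scanl_cons, hstep1]
    have hg1 : true :: (u ++ true :: v)
        = true :: (mirror (mirror u) ++ true :: v) := by rw [mirror_mirror]
    rw [hg1]
    congr 1
    exact scanl_map_inv flipBit
      (fun w => true :: (mirror w ++ true :: v)) (fun a => u.length + 2 - a)
      (fun z => z.length = u.length) (π (mirror u))
      (fun z b hz hb => hcomm1 z b hz hb)
      (fun z b hz hb => by simp [hz])
      (mirror u) (by simp)
  have hA : List.foldl flipBit (true :: u ++ false :: v)
      ((u.length + 2) :: (π (mirror u)).map (fun a => u.length + 2 - a))
      = true :: (compl u ++ true :: v) := by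
    rw [List.foldl_cons, hstep1]
    have hg1 : true :: (u ++ true :: v)
        = true :: (mirror (mirror u) ++ true :: v) := by rw [mirror_mirror]
    rw [hg1]
    have hfold1 : List.foldl flipBit (true :: (mirror (mirror u) ++ true :: v))
          ((π (mirror u)).map (fun a => u.length + 2 - a))
        = true :: (mirror (List.foldl flipBit (mirror u) (π (mirror u))) ++ true :: v) :=
      foldl_map_inv flipBit
        (fun w => true :: (mirror w ++ true :: v)) (fun a => u.length + 2 - a)
        (fun z => z.length = u.length) (π (mirror u))
        (fun z b hz hb => hcomm1 z b hz hb)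
        (fun z b hz hb => by simp [hz])
        (mirror u) (by simp)
    rw [hfold1, path_last hπ (mirror u).length (mirror u) le_rfl (isDyck_mirror hu),
      mirror_compl_mirror]
  rw [hscanl1, hA, flipBit_one]
  have hg2 : (!true) :: (compl u ++ true :: v)
      = (false :: compl u ++ [true]) ++ v := by simp
  rw [hg2]
  have hcomm2 : ∀ z b, b ∈ π v →
      flipBit ((false :: compl u ++ [true]) ++ z) (u.length + 2 + b)
        = (false :: compl u ++ [true]) ++ flipBit z b := by
    intro z b hb
    have hbb := pi_bounds hπ v.length v le_rfl hv b hb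
    have h1 : u.length + 2 + b = (false :: compl u ++ [true]).length + b := by
      simp
    rw [h1, flipBit_append_right _ _ _ (by omega)]
  have hscanl2 : List.scanl flipBit ((false :: compl u ++ [true]) ++ v)
        ((π v).map (fun a => u.length + 2 + a))
      = (pathOf π v).map (fun w => (false :: compl u ++ [true]) ++ w) :=
    scanl_map_inv flipBit
      (fun w => (false :: compl u ++ [true]) ++ w) (fun a => u.length + 2 + a)
      (fun _ => True) (π v)
      (fun z b _ hb => hcomm2 z b hb)
      (fun _ _ _ _ => trivial)
      v trivial
  rw [hscanl2]
  simp

lemma path_mem : ∀ N x, x.length ≤ N → isDyck x →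
    ∀ w ∈ pathOf π x, w.length = x.length ∧ (bal w = 0 ∨ bal w = 2) := by
  intro N
  induction N with
  | zero =>
    intro x hx _ w hw
    have : x = [] := List.length_eq_zero_iff.1 (by omega)
    subst this
    rw [pathOf, hπ.1] at hw
    simp [List.scanl_nil] at hw
    subst hw
    simp
  | succ N ih =>
    intro x hx hd w hw
    rcases eq_or_ne x [] with rfl | hne
    · rw [pathOf, hπ.1] at hw
      simp [List.scanl_nil] at hw
      subst hw
      simp
    · obtain ⟨u, v, hu, hv, rfl⟩ := dyck_decomp hd hne
      rw [decomp_length] at hx ⊢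
      rw [path_struct hπ hu hv] at hw
      rcases List.mem_cons.1 hw with rfl | hw'
      · refine ⟨by rw [decomp_length], Or.inl (dyck_bal hd)⟩
      · rcases List.mem_append.1 hw' with hmem | hmem
      
        · obtain ⟨w', hw2, rfl⟩ := List.mem_map.1 hmem
          have hIH := ih (mirror u) (by simp; omega) (isDyck_mirror hu) w' hw2
          simp only [length_mirror] at hIH
          constructor
          · simp [hIH.1]
            omega
          · have hb := hIH.2
            have : bal (true :: (mirror w' ++ true :: v))
                = 2 - bal w' := by
              simp [dyck_bal hv]
              ring
            rw [this]
            rcases hb with hb | hb <;> rw [hb] <;> [right; left] <;> ring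
        · obtain ⟨w', hw2, rfl⟩ := List.mem_map.1 hmem
          have hIH := ih v (by omega) hv w' hw2
          constructor
          · simp [hIH.1]
            omega
          · have : bal ((false :: compl u ++ [true]) ++ w') = bal w' := by
              simp [dyck_bal hu]
            rw [this]
            exact hIH.2

end Pi

lemma inB_iff (k : ℕ) (y : List Bool) :
    inB k y ↔ (y.length = 2*k ∧ (bal y = 0 ∨ bal y = 2)) := by
  have h := two_count_true y
  constructor
  · rintro ⟨hl, hc⟩
    refine ⟨hl, ?_⟩
    rw [hl] at h
    rcases hc with hc | hc <;> rw [hc] at h <;> [left; right] <;> push_cast at h <;> omega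
  · rintro ⟨hl, hc⟩
    refine ⟨hl, ?_⟩
    rw [hl] at h
    rcases hc with hc | hc
    · left
      rw [hc] at h; push_cast at h
      have h2 : (y.count true : ℤ) = k := by omega
      exact_mod_cast h2
    · right
      rw [hc] at h; push_cast at h
      have h2 : (y.count true : ℤ) = k + 1 := by omega
      exact_mod_cast h2

section Main

variable {π : List Bool → List ℕ} (hπ : IsPiFun π)

include hπ

/-- Classification of the vertex `(pathOf π x').getD i' []` according to the position `i'`. -/
lemma classify {k : ℕ} (hk : 1 ≤ k) (x' : List Bool) (i' : ℕ) (hp1 : isDyck x')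
    (hp2 : x'.length = 2*k) (hp3 : i' ≤ 2*k) :
    ∃ u v, isDyck u ∧ isDyck v ∧ x' = true :: u ++ false :: v ∧
      u.length + v.length + 2 = 2*k ∧
      ( (i' = 0 ∧ (pathOf π x').getD i' [] = x')
      ∨ (1 ≤ i' ∧ i' ≤ u.length + 1 ∧ ∃ w ∈ pathOf π (mirror u),
            (pathOf π (mirror u)).getD (i' - 1) [] = w ∧
            (pathOf π x').getD i' [] = true :: (mirror w ++ true :: v))
      ∨ (u.length + 2 ≤ i' ∧ ∃ w ∈ pathOf π v,
            (pathOf π v).getD (i' - (u.length + 2)) [] = w ∧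
            (pathOf π x').getD i' [] = (false :: compl u ++ [true]) ++ w)) := by
  have hne : x' ≠ [] := by
    intro hc
    rw [hc] at hp2
    simp at hp2
    omega
  obtain ⟨u, v, hu, hv, rfl⟩ := dyck_decomp hp1 hne
  rw [decomp_length] at hp2
  refine ⟨u, v, hu, hv, rfl, hp2, ?_⟩
  have hP1len : (pathOf π (mirror u)).length = u.length + 1 := by
    rw [path_len hπ _ (isDyck_mirror hu), length_mirror]
  have hP2len : (pathOf π v).length = v.length + 1 := path_len hπ _ hv
  rcases Nat.eq_zero_or_pos i' with rfl | hi1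
  · exact Or.inl ⟨rfl, path_getD_zero _⟩
  · have hgd : (pathOf π (true :: u ++ false :: v)).getD i' []
        = ((pathOf π (mirror u)).map (fun w => true :: (mirror w ++ true :: v))
            ++ (pathOf π v).map (fun w => (false :: compl u ++ [true]) ++ w)).getD (i' - 1) [] := by
      rw [path_struct hπ hu hv]
      have h1 : i' = (i' - 1) + 1 := by omega
      conv_lhs => rw [h1]
      rw [List.getD_cons_succ]
    rcases le_or_gt i' (u.length + 1) with hile | higt
    · -- segment B
      refine Or.inr (Or.inl ⟨hi1, hile, ?_⟩)
      have hlt : i' - 1 < (pathOf π (mirror u)).length := by omega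
      refine ⟨(pathOf π (mirror u))[i' - 1], List.getElem_mem hlt,
        List.getD_eq_getElem _ _ hlt, ?_⟩
      rw [hgd, List.getD_append _ _ _ _ (by simp; omega),
        List.getD_eq_getElem _ _ (by simp; omega), List.getElem_map]
    · -- segment C
      refine Or.inr (Or.inr ⟨by omega, ?_⟩)
      have hlt : i' - (u.length + 2) < (pathOf π v).length := by omega
      refine ⟨(pathOf π v)[i' - (u.length + 2)], List.getElem_mem hlt,
        List.getD_eq_getElem _ _ hlt, ?_⟩
      rw [hgd, List.getD_append_right _ _ _ _ (by simp; omega),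
        List.getD_eq_getElem _ _ (by simp; omega), List.getElem_map]
      congr 2
      simp
      omega


omit hπ in
lemma take_eq_head_cons (y : List Bool) (e : ℕ) (h0 : 0 < y.length) (he : 1 ≤ e) :
    y.take e = y[0]'h0 :: (y.drop 1).take (e - 1) := by
  cases y with
  | nil => simp at h0
  | cons b t =>
    cases e with
    | zero => omega
    | succ m => simp [List.take_succ_cons]

omit hπ in
lemma bal_drop_succ (y : List Bool) (d : ℕ) (hd : d < y.length) :
    bal (y.drop d) = (if y[d] then 1 else -1) + bal (y.drop (d+1)) := by
  rw [List.drop_eq_getElem_cons hd, bal_cons]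

omit hπ in
lemma even_of_bal_zero (z : List Bool) (hb : bal z = 0) : ∃ F, z.length = 2*F := by
  have h := two_count_false z
  rw [hb] at h
  exact ⟨z.count false, by exact_mod_cast (by linarith : (z.length:ℤ) = 2*z.count false)⟩

omit hπ in
lemma compl_take (l : List Bool) (n : ℕ) : (compl l).take n = compl (l.take n) :=
  List.map_take.symm

lemma vertex_facts {m : List Bool} (hm : isDyck m) {w : List Bool} (hw : w ∈ pathOf π m) :
    w.length = m.length ∧ (bal w = 0 ∨ bal w = 2) :=
  path_mem hπ m.length m le_rfl hm w hw

set_option maxHeartbeats 2000000 in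
lemma main_aux : ∀ k : ℕ, ∀ y : List Bool, y.length = 2*k → (bal y = 0 ∨ bal y = 2) →
    ∃! p : List Bool × ℕ,
      isDyck p.1 ∧ p.1.length = 2*k ∧ p.2 ≤ 2*k ∧ (pathOf π p.1).getD p.2 [] = y := by
  intro k
  induction k using Nat.strong_induction_on with
  | _ k ih =>
  intro y hylen hybal
  rcases Nat.eq_zero_or_pos k with rfl | hk
  · -- base case k = 0
    have hy : y = [] := List.length_eq_zero_iff.1 (by omega)
    subst hy
    refine ⟨([], 0), ⟨isDyck_nil, by simp, by simp, path_getD_zero _⟩, ?_⟩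
    rintro ⟨x', i'⟩ ⟨h1, h2, h3, h4⟩
    dsimp only at h1 h2 h3 h4
    have hx : x' = [] := List.length_eq_zero_iff.1 (by omega)
    have hi : i' = 0 := by omega
    rw [hx, hi]
  -- now k ≥ 1
  have h0 : 0 < y.length := by omega
  have hyhead : y.getD 0 false = y[0]'h0 := List.getD_eq_getElem _ _ h0
  by_cases hy0 : y[0]'h0 = true
  · -- y starts with true
    rw [hy0] at hyhead
    by_cases hS : ∃ d, d ≤ 2*k ∧ 1 ≤ bal (y.drop d)
    · -- CASE B : y starts with true and has a positive suffix
      obtain ⟨d₀, hd₀P, hd₀le, hmax⟩ :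
          ∃ d₀, 1 ≤ bal (y.drop d₀) ∧ d₀ ≤ 2*k ∧
            ∀ d', d₀ < d' → d' ≤ 2*k → bal (y.drop d') ≤ 0 := by
        classical
        obtain ⟨d, hd2k, hPd⟩ := hS
        refine ⟨Nat.findGreatest (fun d => 1 ≤ bal (y.drop d)) (2*k),
          Nat.findGreatest_spec (P := fun d => 1 ≤ bal (y.drop d)) hd2k hPd,
          Nat.findGreatest_le _, ?_⟩
        intro d' h1 h2
        have h3 : ¬ (1 ≤ bal (y.drop d')) :=
          Nat.findGreatest_is_greatest (P := fun d => 1 ≤ bal (y.drop d)) h1 h2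
        omega
      have hd₀lt : d₀ < 2*k := by
        rcases Nat.lt_or_ge d₀ (2*k) with h | h
        · exact h
        · exfalso
          rw [List.drop_eq_nil_of_le (by omega)] at hd₀P
          simp at hd₀P
      have hnext : bal (y.drop (d₀+1)) ≤ 0 := by
        rcases Nat.lt_or_ge (2*k) (d₀+1) with h | h
        · rw [List.drop_eq_nil_of_le (by omega)]; simp
        · exact hmax (d₀+1) (by omega) h
      have hstep := bal_drop_succ y d₀ (by omega)
      have hgetd : y[d₀]'(by omega) = true := by
        by_contra hc
        rw [Bool.not_eq_true] at hc
        rw [hc] at hstep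
        norm_num at hstep
        omega
      rw [hgetd] at hstep
      norm_num at hstep
      have hbal1 : bal (y.drop d₀) = 1 := by omega
      have hbalnext : bal (y.drop (d₀+1)) = 0 := by omega
      have hd₀1 : 1 ≤ d₀ := by
        by_contra hc
        have h1 : d₀ = 0 := by omega
        rw [h1, List.drop_zero] at hbal1
        omega
      -- parity : d₀ = 2a+1
      obtain ⟨b', hb'⟩ := even_of_bal_zero (y.drop (d₀+1)) hbalnext
      rw [List.length_drop, hylen] at hb'
      obtain ⟨a, ha⟩ : ∃ a, d₀ = 2*a + 1 := ⟨k - b' - 1, by omega⟩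
      have hak : a < k := by omega
      -- define the pieces
      set v := y.drop (d₀ + 1) with hvdef
      set z := (y.drop 1).take (d₀ - 1) with hzdef
      have hvlen : v.length = 2*(k - a - 1) := by
        rw [hvdef, List.length_drop, hylen]; omega
      have hvd : isDyck v := by
        rw [isDyck_iff_drop]
        refine ⟨hbalnext, fun n => ?_⟩
        rw [hvdef, List.drop_drop]
        rcases Nat.lt_or_ge (2*k) (n + (d₀ + 1)) with h | h
        · rw [List.drop_eq_nil_of_le (by omega)]; simp
        · exact hmax _ (by omega) (by omega)
      have hzlen : z.length = 2*a := by
        rw [hzdef, List.length_take, List.length_drop, hylen,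
          min_eq_left (by omega)]
        omega
      have hysplit : y = true :: (z ++ true :: v) := by
        conv_lhs => rw [← List.take_append_drop d₀ y]
        rw [take_eq_head_cons y d₀ h0 (by omega), hy0, ← hzdef,
          List.drop_eq_getElem_cons (by omega : d₀ < y.length), hgetd, ← hvdef]
        simp
      have hzbal : bal z = bal y - 2 := by
        have h1 := bal_take_add_drop y d₀
        rw [take_eq_head_cons y d₀ h0 (by omega), hy0, ← hzdef, bal_cons, hbal1] at h1
        norm_num at h1
        omega
      -- IH applied to w = mirror z
      have hwlen : (mirror z).length = 2*a := by rw [length_mirror, hzlen]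
      have hwbal : bal (mirror z) = 0 ∨ bal (mirror z) = 2 := by
        rw [bal_mirror, hzbal]
        omega
      obtain ⟨⟨m, j⟩, ⟨hm, hmlen, hjle, hmeq⟩, huniq⟩ := ih a hak (mirror z) hwlen hwbal
      dsimp only at hm hmlen hjle hmeq huniq
      -- construct the witness
      set u := mirror m with hudef
      have hu : isDyck u := isDyck_mirror hm
      have hulen : u.length = 2*a := by rw [hudef, length_mirror, hmlen]
      have hmu : mirror u = m := by rw [hudef, mirror_mirror]
      set x := true :: u ++ false :: v with hxdef
      have hxd : isDyck x := isDyck_compose hu hvd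
      have hxlen : x.length = 2*k := by
        rw [hxdef, decomp_length, hulen, hvlen]; omega
      have hP1len : (pathOf π (mirror u)).length = 2*a + 1 := by
        rw [hmu, path_len hπ _ hm, hmlen]
      have hgd : (pathOf π x).getD (1 + j) [] = y := by
        rw [hxdef, path_struct hπ hu hvd]
        have h1 : 1 + j = j + 1 := by omega
        rw [h1, List.getD_cons_succ,
          List.getD_append _ _ _ _ (by simp only [List.length_map]; omega),
          List.getD_eq_getElem _ _ (by simp only [List.length_map]; omega),
          List.getElem_map]
        have h2 : (pathOf π (mirror u))[j]'(by omega) = mirror z := by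
          rw [← List.getD_eq_getElem _ ([] : List Bool) (by omega), hmu, hmeq]
        rw [h2, mirror_mirror, ← hysplit]
      refine ⟨(x, 1 + j), ⟨hxd, hxlen, by show 1 + j ≤ 2*k; omega, hgd⟩, ?_⟩
      -- uniqueness
      rintro ⟨x', i'⟩ ⟨hq1, hq2, hq3, hq4⟩
      dsimp only at hq1 hq2 hq3 hq4
      obtain ⟨u', v', hu', hv', hx'eq, hlen', hcase⟩ :=
        classify hπ hk x' i' hq1 hq2 hq3
      rcases hcase with ⟨hi0, hval⟩ |
        ⟨hi1, hile, w', hwmem, hwval, hval⟩ | ⟨hige, w', hwmem, hwval, hval⟩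
      · -- i' = 0 : x' = y is a Dyck word, contradicting the positive suffix
        exfalso
        rw [hq4] at hval
        have hyd : isDyck y := hval ▸ hq1
        have := dyck_drop hyd d₀
        omega
      · -- segment B : forced to coincide with our witness
        rw [hq4] at hval
        have hw'len : w'.length = u'.length := by
          have := (vertex_facts hπ (isDyck_mirror hu') hwmem).1
          rwa [length_mirror] at this
        have hdrop : y.drop (u'.length + 1) = true :: v' := by
          rw [hval]
          have h1 : u'.length + 1 = (mirror w').length + 1 := by
            rw [length_mirror, hw'len]
          rw [h1, List.drop_succ_cons, List.drop_left]
        have hd₀eq : d₀ = u'.length + 1 := by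
          have hPu : 1 ≤ bal (y.drop (u'.length + 1)) := by
            rw [hdrop, bal_cons, dyck_bal hv']
            norm_num
          rcases Nat.lt_or_ge d₀ (u'.length + 1) with h | h
          · exfalso
            have := hmax (u'.length + 1) h (by omega)
            omega
          · rcases Nat.lt_or_ge (u'.length + 1) d₀ with h2 | h2
            · exfalso
              have hdrop2 : y.drop d₀ = v'.drop (d₀ - (u'.length + 2)) := by
                have h3 : d₀ = (u'.length + 1) + (d₀ - (u'.length + 1)) := by omega
                conv_lhs => rw [h3]
                rw [← List.drop_drop, hdrop]
                have h4 : d₀ - (u'.length + 1) = (d₀ - (u'.length + 2)) + 1 := by omega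
                rw [h4, List.drop_succ_cons]
              rw [hdrop2] at hbal1
              have := dyck_drop hv' (d₀ - (u'.length + 2))
              omega
            · omega
        -- extract equalities
        have heq : true :: (mirror w' ++ true :: v') = true :: (z ++ true :: v) := by
          rw [← hval, hysplit]
        have heq2 : mirror w' ++ true :: v' = z ++ true :: v := List.cons_injective heq
        have hlenz : (mirror w').length = z.length := by
          rw [length_mirror, hw'len, hzlen]
          omega
        obtain ⟨hz1, hz2⟩ := List.append_inj heq2 hlenz
        have hvv : v' = v := List.cons_injective hz2
        have hw'z : w' = mirror z := by rw [← hz1, mirror_mirror]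
        -- apply induction uniqueness
        have hval' : (mirror u', i' - 1) = (m, j) := by
          apply huniq
          refine ⟨isDyck_mirror hu', ?_, ?_, ?_⟩
          · show (mirror u').length = 2*a
            rw [length_mirror]
            omega
          · show i' - 1 ≤ 2*a
            omega
          · show (pathOf π (mirror u')).getD (i' - 1) [] = mirror z
            rw [hwval, hw'z]
        have hmu' : mirror u' = m := (Prod.ext_iff.1 hval').1
        have hju : i' - 1 = j := (Prod.ext_iff.1 hval').2
        have hu'u : u' = u := by
          rw [hudef, ← hmu', mirror_mirror]
        have hxx : x' = x := by
          rw [hx'eq, hxdef, hu'u, hvv]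
        exact Prod.ext hxx (by show i' = 1 + j; omega)
      · -- segment C : impossible since y starts with true
        exfalso
        rw [hq4] at hval
        rw [hval] at hyhead
        simp at hyhead
    · -- CASE D : y starts with true and has no positive suffix: y is a Dyck word
      push_neg at hS
      have hbal0 : bal y = 0 := by
        rcases hybal with h | h
        · exact h
        · exfalso
          have := hS 0 (by omega)
          rw [List.drop_zero] at this
          omega
      have hyd : isDyck y := by
        rw [isDyck_iff_drop]
        refine ⟨hbal0, fun n => ?_⟩
        rcases Nat.lt_or_ge (2*k) n with h | h
        · rw [List.drop_eq_nil_of_le (by omega)]; simp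
        · have := hS n h
          omega
      refine ⟨(y, 0), ⟨hyd, hylen, by omega, path_getD_zero _⟩, ?_⟩
      rintro ⟨x', i'⟩ ⟨hq1, hq2, hq3, hq4⟩
      dsimp only at hq1 hq2 hq3 hq4
      obtain ⟨u', v', hu', hv', hx'eq, hlen', hcase⟩ :=
        classify hπ hk x' i' hq1 hq2 hq3
      rcases hcase with ⟨hi0, hval⟩ |
        ⟨hi1, hile, w', hwmem, hwval, hval⟩ | ⟨hige, w', hwmem, hwval, hval⟩
      · rw [hq4] at hval
        exact Prod.ext hval.symm hi0
      · -- positive suffix exists: contradiction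
        exfalso
        rw [hq4] at hval
        have hw'len : w'.length = u'.length := by
          have := (vertex_facts hπ (isDyck_mirror hu') hwmem).1
          rwa [length_mirror] at this
        have hdrop : y.drop (u'.length + 1) = true :: v' := by
          rw [hval]
          have h1 : u'.length + 1 = (mirror w').length + 1 := by
            rw [length_mirror, hw'len]
          rw [h1, List.drop_succ_cons, List.drop_left]
        have := hS (u'.length + 1) (by omega)
        rw [hdrop, bal_cons, dyck_bal hv'] at this
        norm_num at this
      · exfalso
        rw [hq4] at hval
        rw [hval] at hyhead
        simp at hyhead
  · -- CASE C : y starts with false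
    rw [Bool.not_eq_true] at hy0
    rw [hy0] at hyhead
    have hQex : ∃ n, 1 ≤ n ∧ 0 ≤ bal (y.take n) :=
      ⟨2*k, by omega, by rw [← hylen, List.take_length]; omega⟩
    obtain ⟨e, he1, he0, hemin, he2k⟩ :
        ∃ e, 1 ≤ e ∧ 0 ≤ bal (y.take e) ∧
          (∀ n, 1 ≤ n → n < e → bal (y.take n) ≤ -1) ∧ e ≤ 2*k := by
      classical
      refine ⟨Nat.find hQex, (Nat.find_spec hQex).1, (Nat.find_spec hQex).2, ?_, ?_⟩
      · intro n h1 h2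
        have := Nat.find_min hQex h2
        omega
      · exact Nat.find_le ⟨by omega, by rw [← hylen, List.take_length]; omega⟩
    have he2 : 2 ≤ e := by
      by_contra hc
      have he' : e = 1 := by omega
      have h1 := bal_take_succ y 0 (by omega)
      rw [hy0] at h1
      norm_num at h1
      rw [he'] at he0
      rw [h1] at he0
      omega
    have hstep := bal_take_succ y (e - 1) (by omega)
    rw [Nat.sub_add_cancel (by omega : 1 ≤ e)] at hstep
    have hprev := hemin (e-1) (by omega) (by omega)
    have hgete : y[e-1]'(by omega) = true := by
      by_contra hc
      rw [Bool.not_eq_true] at hc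
      rw [hc] at hstep
      norm_num at hstep
      omega
    rw [hgete] at hstep
    norm_num at hstep
    have hbale : bal (y.take e) = 0 := by omega
    -- parity : e = 2F
    obtain ⟨F, hF⟩ := even_of_bal_zero (y.take e) hbale
    rw [List.length_take, hylen, min_eq_left (by omega)] at hF
    have hF1 : 1 ≤ F := by omega
    have hFk : F ≤ k := by omega
    -- define the pieces
    set c := (y.drop 1).take (e - 2) with hcdef
    set u := compl c with hudef
    set w := y.drop e with hwdef
    have hclen : c.length = e - 2 := by
      rw [hcdef, List.length_take, List.length_drop, hylen, min_eq_left (by omega)]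
    have htakee : y.take e = false :: (c ++ [true]) := by
      rw [take_eq_head_cons y e h0 (by omega), hy0]
      congr 1
      have h1 : e - 1 = (e - 2) + 1 := by omega
      rw [h1, List.take_succ, ← hcdef]
      congr 1
      have h2 : e - 2 < (y.drop 1).length := by
        rw [List.length_drop, hylen]; omega
      rw [List.getElem?_eq_getElem h2]
      simp only [List.getElem_drop, Option.toList_some]
      have h3 : 1 + (e - 2) = e - 1 := by omega
      simp only [h3]
      rw [hgete]
    have hysplit : y = false :: (c ++ (true :: w)) := by
      conv_lhs => rw [← List.take_append_drop e y]
      rw [htakee, ← hwdef]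
      simp
    have hcbal : bal c = 0 := by
      rw [htakee, bal_cons] at hbale
      simp only [bal_append] at hbale
      norm_num at hbale
      omega
    have hu : isDyck u := by
      rw [isDyck_iff]
      constructor
      · rw [hudef, bal_compl, hcbal]; ring
      · intro n
        rw [hudef, compl_take, bal_compl]
        rcases Nat.lt_or_ge n (e - 2) with h | h
        · have hcc : c.take n = (y.drop 1).take n := by
            rw [hcdef, List.take_take, min_eq_left (by omega)]
          have h1 : bal (y.take (n+1)) = -1 + bal ((y.drop 1).take n) := by
            rw [take_eq_head_cons y (n+1) h0 (by omega), hy0, bal_cons]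
            norm_num
          have h2 := hemin (n+1) (by omega) (by omega)
          rw [h1] at h2
          rw [hcc]
          omega
        · rw [List.take_of_length_le (by omega), hcbal]
          norm_num
    have hwlen : w.length = 2*(k - F) := by
      rw [hwdef, List.length_drop, hylen]; omega
    have hwbal : bal w = 0 ∨ bal w = 2 := by
      have h1 := bal_take_add_drop y e
      rw [hbale, ← hwdef] at h1
      omega
    have hFk' : k - F < k := by omega
    obtain ⟨⟨v, j⟩, ⟨hv, hvlen, hjle, hveq⟩, huniq⟩ := ih (k - F) hFk' w hwlen hwbal
    dsimp only at hv hvlen hjle hveq huniq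
    set x := true :: u ++ false :: v with hxdef
    have hxd : isDyck x := isDyck_compose hu hv
    have hulen : u.length = e - 2 := by rw [hudef, length_compl, hclen]
    have hxlen : x.length = 2*k := by
      rw [hxdef, decomp_length, hulen, hvlen]; omega
    have hP1len : (pathOf π (mirror u)).length = (e - 2) + 1 := by
      rw [path_len hπ _ (isDyck_mirror hu), length_mirror, hulen]
    have hP2len : (pathOf π v).length = 2*(k-F) + 1 := by
      rw [path_len hπ _ hv, hvlen]
    have hgd : (pathOf π x).getD (e + j) [] = y := by
      rw [hxdef, path_struct hπ hu hv]
      have h1 : e + j = (e + j - 1) + 1 := by omega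
      conv_lhs => rw [h1]
      rw [List.getD_cons_succ,
        List.getD_append_right _ _ _ _ (by simp only [List.length_map]; omega),
        List.getD_eq_getElem _ _ (by simp only [List.length_map]; omega),
        List.getElem_map]
      have h2 : e + j - 1 - ((pathOf π (mirror u)).map
          (fun w => true :: (mirror w ++ true :: v))).length = j := by
        simp only [List.length_map, hP1len]
        omega
      simp only [h2]
      have h3 : (pathOf π v)[j]'(by omega) = w := by
        rw [← List.getD_eq_getElem _ ([] : List Bool) (by omega), hveq]
      rw [h3, hysplit, hudef, compl_compl]
      simp
    refine ⟨(x, e + j), ⟨hxd, hxlen, by show e + j ≤ 2*k; omega, hgd⟩, ?_⟩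
    -- uniqueness
    rintro ⟨x', i'⟩ ⟨hq1, hq2, hq3, hq4⟩
    dsimp only at hq1 hq2 hq3 hq4
    obtain ⟨u', v', hu', hv', hx'eq, hlen', hcase⟩ :=
      classify hπ hk x' i' hq1 hq2 hq3
    rcases hcase with ⟨hi0, hval⟩ |
      ⟨hi1, hile, w', hwmem, hwval, hval⟩ | ⟨hige, w', hwmem, hwval, hval⟩
    · -- i' = 0 : y would be Dyck, but bal (y.take 1) = -1
      exfalso
      rw [hq4] at hval
      have hyd : isDyck y := hval ▸ hq1
      have h1 := bal_take_succ y 0 (by omega)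
      rw [hy0] at h1
      norm_num at h1
      have h2 := dyck_take hyd 1
      rw [h1] at h2
      omega
    · -- segment B : y would start with true
      exfalso
      rw [hq4] at hval
      rw [hval] at hyhead
      simp at hyhead
    · -- segment C : forced to coincide
      rw [hq4] at hval
      have hval2 : y = false :: (compl u' ++ (true :: w')) := by
        rw [hval]
        simp
      have htk1 : (compl u' ++ (true :: w')).take (u'.length + 1) = compl u' ++ [true] := by
        rw [List.take_append, List.take_of_length_le (by simp), length_compl]
        congr 1
        have h3 : u'.length + 1 - u'.length = 1 := by omega
        rw [h3]
        simp
      have htk : y.take (u'.length + 2) = false :: (compl u' ++ [true]) := by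
        have h4 : u'.length + 2 = (u'.length + 1) + 1 := by omega
        rw [hval2, h4, List.take_succ_cons, htk1]
      have heeq : e = u'.length + 2 := by
        have hbal2 : bal (y.take (u'.length + 2)) = 0 := by
          rw [htk, bal_cons, bal_append, bal_compl, dyck_bal hu']
          norm_num
        rcases Nat.lt_or_ge (u'.length + 2) e with h | h
        · exfalso
          have := hemin (u'.length + 2) (by omega) h
          omega
        · rcases Nat.lt_or_ge e (u'.length + 2) with h2 | h2
          · exfalso
            have htke : y.take e
                = false :: ((compl u').take (e-1) ++ (true :: w').take (e - 1 - u'.length)) := by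
              rw [hval2]
              have h4 : e = (e - 1) + 1 := by omega
              conv_lhs => rw [h4]
              rw [List.take_succ_cons, List.take_append, length_compl]
            have h5 : e - 1 - u'.length = 0 := by omega
            rw [htke, h5, List.take_zero, List.append_nil, compl_take, bal_cons, bal_compl] at he0
            have h6 := dyck_take hu' (e-1)
            norm_num at he0
            omega
          · omega
      have hcu : compl u' = c ∧ true :: w' = true :: w := by
        have heq : false :: (compl u' ++ (true :: w')) = false :: (c ++ (true :: w)) := by
          rw [← hval2, hysplit]
        have heq2 := List.cons_injective heq
        exact List.append_inj heq2 (by rw [length_compl, hclen]; omega)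
      have hu'u : u' = u := by rw [hudef, ← hcu.1, compl_compl]
      have hww : w' = w := List.cons_injective hcu.2
      have hval' : (v', i' - e) = (v, j) := by
        apply huniq
        refine ⟨hv', ?_, ?_, ?_⟩
        · show v'.length = 2*(k - F)
          omega
        · show i' - e ≤ 2*(k - F)
          omega
        · show (pathOf π v').getD (i' - e) [] = w
          rw [show i' - e = i' - (u'.length + 2) from by omega, hwval, hww]
      have hvv : v' = v := (Prod.ext_iff.1 hval').1
      have hje : i' - e = j := (Prod.ext_iff.1 hval').2
      have hxx : x' = x := by rw [hx'eq, hxdef, hu'u, hvv]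
      exact Prod.ext hxx (by show i' = e + j; omega)

end Main

end Aux

theorem stmt_7 (π : List Bool → List ℕ) (hπ : IsPiFun π) (k : ℕ) (hk : 1 ≤ k)
    (y : List Bool) (hy : inB k y) :
    ∃! p : List Bool × ℕ,
      isDyck p.1 ∧ p.1.length = 2*k ∧ p.2 ≤ 2*k ∧ (pathOf π p.1).getD p.2 [] = y := by
  obtain ⟨h1, h2⟩ := (Aux.inB_iff k y).1 hy
  exact Aux.main_aux hπ k y h1 h2
end

section
/- Every bitstring y of length 2k (k ≥ 1) with weight k or k+1 satisfies exactly one of the following: (1) y = 1u0v with u ∈ D_{ℓ−1} and v ∈ D_{k−ℓ} for some ℓ ∈ [k]; (2) y = 1w1v with w̄^rev ∈ B_{ℓ−1} and v ∈ D_{k−ℓ} for some ℓ ∈ [k]; (3) y = 0ū1w with u ∈ D_{ℓ−1} and w ∈ B_{k−ℓ} for some ℓ ∈ [k]; and in each case the decomposition is unique. -/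
/-- Case (1): `y = 1u0v` with `u ∈ D_{ℓ-1}` and `v ∈ D_{k-ℓ}`. -/
def case1 (k : ℕ) (y : List Bool) (t : ℕ × List Bool × List Bool) : Prop :=
  1 ≤ t.1 ∧ t.1 ≤ k ∧ isDyck t.2.1 ∧ t.2.1.length = 2*(t.1-1) ∧
    isDyck t.2.2 ∧ t.2.2.length = 2*(k-t.1) ∧ y = true :: t.2.1 ++ false :: t.2.2

/-- Case (2): `y = 1w1v` with `w̄^rev ∈ B_{ℓ-1}` and `v ∈ D_{k-ℓ}`. -/
def case2 (k : ℕ) (y : List Bool) (t : ℕ × List Bool × List Bool) : Prop :=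
  1 ≤ t.1 ∧ t.1 ≤ k ∧ inB (t.1-1) (mirror t.2.1) ∧
    isDyck t.2.2 ∧ t.2.2.length = 2*(k-t.1) ∧ y = true :: t.2.1 ++ true :: t.2.2

/-- Case (3): `y = 0ū1w` with `u ∈ D_{ℓ-1}` and `w ∈ B_{k-ℓ}`. -/
def case3 (k : ℕ) (y : List Bool) (t : ℕ × List Bool × List Bool) : Prop :=
  1 ≤ t.1 ∧ t.1 ≤ k ∧ isDyck t.2.1 ∧ t.2.1.length = 2*(t.1-1) ∧
    inB (k-t.1) t.2.2 ∧ y = false :: compl t.2.1 ++ true :: t.2.2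

namespace S8

def bal (x : List Bool) : ℤ := (x.count true : ℤ) - (x.count false : ℤ)

lemma count_tf (x : List Bool) : x.count true + x.count false = x.length := by
  induction x with
  | nil => simp
  | cons b t ih => cases b <;> simp [List.count_cons] <;> omega

lemma bal_eq (x : List Bool) : bal x = 2*(x.count true : ℤ) - x.length := by
  have := count_tf x; unfold bal; omega

lemma bal_nil : bal [] = 0 := by simp [bal]

lemma bal_append (a b : List Bool) : bal (a ++ b) = bal a + bal b := by
  simp [bal, List.count_append]; ring

lemma bal_cons (b : Bool) (x : List Bool) : bal (b :: x) = (if b then 1 else -1) + bal x := by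
  cases b <;> simp [bal, List.count_cons] <;> ring

lemma bal_single (b : Bool) : bal [b] = if b then 1 else -1 := by
  cases b <;> simp [bal]

lemma compl_cons (b : Bool) (x : List Bool) : compl (b :: x) = (!b) :: compl x := rfl

lemma bal_compl (x : List Bool) : bal (compl x) = -bal x := by
  induction x with
  | nil => simp [bal]; rfl
  | cons b t ih =>
    rw [compl_cons, bal_cons, bal_cons, ih]; cases b <;> simp <;> ring

lemma mirror_cons (b : Bool) (x : List Bool) : mirror (b :: x) = mirror x ++ [!b] := by
  simp [mirror]

lemma bal_mirror (x : List Bool) : bal (mirror x) = -bal x := by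
  induction x with
  | nil => simp [mirror, bal]
  | cons b t ih =>
    rw [mirror_cons, bal_append, ih, bal_cons]
    cases b <;> simp [bal] <;> ring

lemma length_mirror (x : List Bool) : (mirror x).length = x.length := by simp [mirror]

lemma length_compl (x : List Bool) : (compl x).length = x.length := by
  simp [_root_.compl]

lemma compl_compl (x : List Bool) : compl (compl x) = x := by
  simp [_root_.compl, Function.comp_def]

lemma compl_take (x : List Bool) (n : ℕ) : (compl x).take n = compl (x.take n) := by
  simp [_root_.compl, List.map_take]

lemma isDyck_iff (x : List Bool) : isDyck x ↔ bal x = 0 ∧ ∀ n, 0 ≤ bal (x.take n) := by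
  unfold isDyck bal
  constructor
  · rintro ⟨h1, h2⟩
    refine ⟨by omega, fun n => ?_⟩
    have := h2 n; omega
  · rintro ⟨h1, h2⟩
    refine ⟨by omega, fun n => ?_⟩
    have := h2 n; omega

lemma step_le (y : List Bool) (i : ℕ) :
    bal (y.take (i+1)) ≤ bal (y.take i) + 1 ∧ bal (y.take i) - 1 ≤ bal (y.take (i+1)) := by
  rw [List.take_succ, bal_append]
  rcases h : y[i]? with _ | b
  · simp [bal]
  · cases b <;> simp [bal_single] <;> omega

lemma bal_take_of_ge (y : List Bool) (i : ℕ) (h : y.length ≤ i) : bal (y.take i) = bal y := by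
  rw [List.take_of_length_le h]

lemma ivt_up (f : ℕ → ℤ) (hstep : ∀ i, f (i+1) ≤ f i + 1) (a b : ℕ) (m : ℤ)
    (hab : a ≤ b) (ha : f a ≤ m) (hb : m ≤ f b) : ∃ t, a ≤ t ∧ t ≤ b ∧ f t = m := by
  have hex : ∃ t, a ≤ t ∧ m ≤ f t := ⟨b, hab, hb⟩
  obtain ⟨h1, h2⟩ := Nat.find_spec hex
  have htb : Nat.find hex ≤ b := Nat.find_min' hex ⟨hab, hb⟩
  rcases Nat.eq_or_lt_of_le h1 with he | hl
  · exact ⟨Nat.find hex, h1, htb, le_antisymm (he ▸ ha) h2⟩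
  · obtain ⟨s, hs⟩ : ∃ s, Nat.find hex = s + 1 := ⟨Nat.find hex - 1, by omega⟩
    have hmin := Nat.find_min hex (m := s) (by omega)
    push_neg at hmin
    have hfs : f s < m := by
      by_contra hc; push_neg at hc
      exact absurd (hmin (by omega)) (not_lt.2 hc)
    have := hstep s
    rw [hs] at h2 htb
    exact ⟨s+1, by omega, htb, by omega⟩

lemma ivt_down (f : ℕ → ℤ) (hstep : ∀ i, f i - 1 ≤ f (i+1)) (a b : ℕ) (m : ℤ)
    (hab : a ≤ b) (ha : m ≤ f a) (hb : f b ≤ m) : ∃ t, a ≤ t ∧ t ≤ b ∧ f t = m := by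
  obtain ⟨t, h1, h2, h3⟩ := ivt_up (fun i => -f i) (fun i => by have := hstep i; show -f (i+1) ≤ -f i + 1; omega)
    a b (-m) hab (by simpa) (by simpa)
  exact ⟨t, h1, h2, by omega⟩

lemma take_one_eq {y : List Bool} {b : Bool} {u v : List Bool} (hy : y = (b :: u) ++ v) :
    y.take 1 = [b] := by subst hy; rfl

lemma bal_take_small' {y : List Bool} {b c : Bool} {u v : List Bool}
    (hy : y = (b :: u) ++ c :: v) {j : ℕ} (hj : j ≤ u.length) :
    bal (y.take (j+1)) = bal [b] + bal (u.take j) := by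
  subst hy
  rw [List.cons_append, List.take_succ_cons, List.take_append_of_le_length hj, bal_cons, bal_single]

lemma bal_take_big' {y : List Bool} {b c : Bool} {u v : List Bool}
    (hy : y = (b :: u) ++ c :: v) (j : ℕ) :
    bal (y.take (u.length + 2 + j)) = bal [b] + bal u + bal [c] + bal (v.take j) := by
  subst hy
  have h1 : u.length + 2 + j = (u.length + (1 + j)) + 1 := by omega
  rw [h1, List.cons_append, List.take_succ_cons, List.take_append, List.take_cons]
  rw [bal_cons, bal_append, bal_cons, bal_single, bal_single]
  rw [show u.length + (1 + j) - u.length - 1 = j by omega, List.take_of_length_le (by omega)]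
  · ring
  · omega

lemma bal_full' {y : List Bool} {b c : Bool} {u v : List Bool}
    (hy : y = (b :: u) ++ c :: v) :
    bal y = bal [b] + bal u + bal [c] + bal v := by
  subst hy
  rw [List.cons_append, bal_cons, bal_append, bal_cons, bal_single, bal_single]; ring

lemma length_eq' {y : List Bool} {b c : Bool} {u v : List Bool}
    (hy : y = (b :: u) ++ c :: v) : y.length = u.length + v.length + 2 := by
  subst hy; simp; omega

lemma split3 (y : List Bool) (n : ℕ) (h : n + 1 < y.length) :
    ∃ a b, y = (a :: (y.drop 1).take n) ++ b :: y.drop (n+2) ∧ y.take 1 = [a] ∧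
      y.take (n+2) = y.take (n+1) ++ [b] := by
  refine ⟨y[0], y[n+1]'h, ?_, ?_, ?_⟩
  · have h0 : y = y[0] :: y.drop 1 := by
      conv_lhs => rw [show y = y.drop 0 from rfl, List.drop_eq_getElem_cons (by omega)]
    have h2 : y.drop 1 = (y.drop 1).take n ++ (y.drop 1).drop n := (List.take_append_drop _ _).symm
    have h3 : (y.drop 1).drop n = y.drop (n+1) := by rw [List.drop_drop, Nat.add_comm]
    have h4 : y.drop (n+1) = y[n+1] :: y.drop (n+2) := List.drop_eq_getElem_cons h
    rw [List.cons_append]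
    conv_lhs => rw [h0, h2, h3, h4]
  · rw [List.take_succ]
    simp [List.getElem?_eq_getElem (show 0 < y.length by omega)]
  · rw [show n+2 = (n+1)+1 from rfl, List.take_succ]
    simp [List.getElem?_eq_getElem h]

lemma bal_take_parity (y : List Bool) (j : ℕ) (h : j ≤ y.length) :
    bal (y.take j) = 2 * ((y.take j).count true : ℤ) - j := by
  rw [bal_eq, List.length_take, Nat.min_eq_left h]

lemma eq_true_of_bal {b : Bool} (h : bal [b] = 1) : b = true := by
  cases b
  · rw [bal_single] at h; simp at h
  · rfl

lemma eq_false_of_bal {b : Bool} (h : bal [b] = -1) : b = false := by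
  cases b
  · rfl
  · rw [bal_single] at h; simp at h


lemma ivt_s_up (y : List Bool) (a b : ℕ) (m : ℤ) (hab : a ≤ b)
    (ha : bal (y.take a) ≤ m) (hb : m ≤ bal (y.take b)) :
    ∃ t, a ≤ t ∧ t ≤ b ∧ bal (y.take t) = m :=
  ivt_up (fun i => bal (y.take i)) (fun i => (step_le y i).1) a b m hab ha hb

lemma ivt_s_down (y : List Bool) (a b : ℕ) (m : ℤ) (hab : a ≤ b)
    (ha : m ≤ bal (y.take a)) (hb : bal (y.take b) ≤ m) :
    ∃ t, a ≤ t ∧ t ≤ b ∧ bal (y.take t) = m :=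
  ivt_down (fun i => bal (y.take i)) (fun i => (step_le y i).2) a b m hab ha hb

lemma bal_true : bal [true] = 1 := by simp [bal]
lemma bal_false : bal [false] = -1 := by simp [bal]

lemma case1_facts {k ℓ : ℕ} {y u v : List Bool} (h : case1 k y (ℓ, u, v)) :
    (∀ j, 1 ≤ j → j ≤ 2*ℓ - 1 → 1 ≤ bal (y.take j)) ∧ bal (y.take (2*ℓ)) = 0 ∧ isDyck y := by
  obtain ⟨h1, h2, hu, hul, hv, hvl, hy⟩ := h
  dsimp only at h1 h2 hu hul hv hvl hy
  rw [isDyck_iff] at hu hv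
  have hsmall : ∀ j, j ≤ u.length → bal (y.take (j+1)) = 1 + bal (u.take j) := by
    intro j hj; rw [bal_take_small' hy hj, bal_true]
  have hbig : ∀ j, bal (y.take (u.length + 2 + j)) = bal (v.take j) := by
    intro j; rw [bal_take_big' hy j, bal_true, bal_false, hu.1]; ring
  have hfull : bal y = 0 := by
    rw [bal_full' hy, bal_true, bal_false, hu.1, hv.1]; ring
  refine ⟨?_, ?_, ?_⟩
  · intro j hj1 hj2
    obtain ⟨j', rfl⟩ : ∃ j', j = j'+1 := ⟨j-1, by omega⟩
    rw [hsmall j' (by omega)]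
    have := hu.2 j'; omega
  · rw [show 2*ℓ = u.length + 2 + 0 by omega, hbig 0]
    simp [bal]
  · rw [isDyck_iff]
    refine ⟨hfull, fun n => ?_⟩
    rcases Nat.lt_or_ge n (u.length + 2) with hn | hn
    · rcases Nat.eq_zero_or_pos n with rfl | hn1
      · simp [bal]
      · obtain ⟨j', rfl⟩ : ∃ j', n = j'+1 := ⟨n-1, by omega⟩
        rw [hsmall j' (by omega)]
        have := hu.2 j'; omega
    · obtain ⟨j, rfl⟩ : ∃ j, n = u.length + 2 + j := ⟨n - (u.length+2), by omega⟩
      rw [hbig]; exact hv.2 j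

lemma case2_facts {k ℓ : ℕ} {y w v : List Bool} (h : case2 k y (ℓ, w, v)) :
    (bal y = 0 ∨ bal y = 2) ∧ bal (y.take (2*ℓ - 1)) = bal y - 1 ∧
      (∀ j, bal y ≤ bal (y.take (2*ℓ + j))) := by
  obtain ⟨h1, h2, hw, hv, hvl, hy⟩ := h
  dsimp only at h1 h2 hw hv hvl hy
  rw [isDyck_iff] at hv
  obtain ⟨hwml, hwmc⟩ := hw
  rw [length_mirror] at hwml
  have hwl : w.length = 2*ℓ - 2 := by omega
  have hmir := bal_mirror w
  have hme := bal_eq (mirror w)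
  rw [length_mirror] at hme
  have hbw : bal w = 0 ∨ bal w = -2 := by
    rcases hwmc with hc | hc <;> rw [hc] at hme <;> omega
  have hfull : bal y = 2 + bal w := by
    rw [bal_full' hy, bal_true, hv.1]; ring
  have hsJ : bal (y.take (2*ℓ - 1)) = bal y - 1 := by
    have := bal_take_small' hy (le_refl w.length)
    rw [List.take_length, bal_true, show w.length + 1 = 2*ℓ - 1 by omega] at this
    omega
  refine ⟨by omega, hsJ, fun j => ?_⟩
  have := bal_take_big' hy j
  rw [bal_true, show w.length + 2 + j = 2*ℓ + j by omega] at this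
  have := hv.2 j
  omega

lemma case3_facts {k ℓ : ℕ} {y u w : List Bool} (h : case3 k y (ℓ, u, w)) :
    (∀ j, 1 ≤ j → j ≤ 2*ℓ - 1 → bal (y.take j) ≤ -1) ∧ bal (y.take (2*ℓ)) = 0 := by
  obtain ⟨h1, h2, hu, hul, hw, hy⟩ := h
  dsimp only at h1 h2 hu hul hw hy
  rw [isDyck_iff] at hu
  have hcl : (compl u).length = 2*ℓ - 2 := by rw [length_compl]; omega
  constructor
  · intro j hj1 hj2
    obtain ⟨j', rfl⟩ : ∃ j', j = j'+1 := ⟨j-1, by omega⟩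
    rw [bal_take_small' hy (show j' ≤ (compl u).length by omega), bal_false, compl_take, bal_compl]
    have := hu.2 j'; omega
  · rw [show 2*ℓ = (compl u).length + 2 + 0 by omega, bal_take_big' hy, bal_false, bal_true,
      bal_compl, hu.1]
    simp [bal]

lemma case1_unique {k : ℕ} {y : List Bool} {t t' : ℕ × List Bool × List Bool}
    (h : case1 k y t) (h' : case1 k y t') : t = t' := by
  obtain ⟨ℓ, u, v⟩ := t; obtain ⟨ℓ', u', v'⟩ := t'
  have F := case1_facts h; have F' := case1_facts h'
  obtain ⟨hl1, _, _, hul, _, _, hy1⟩ := h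
  obtain ⟨hl1', _, _, hul', _, _, hy1'⟩ := h'
  dsimp only at hl1 hul hy1 hl1' hul' hy1'
  have hll : ℓ = ℓ' := by
    by_contra hne
    rcases Nat.lt_or_ge ℓ ℓ' with hlt | hge
    · have h1 := F'.1 (2*ℓ) (by omega) (by omega)
      rw [F.2.1] at h1; omega
    · have h1 := F.1 (2*ℓ') (by omega) (by omega)
      rw [F'.2.1] at h1; omega
  subst hll
  obtain ⟨e1, e2⟩ := List.append_inj (hy1.symm.trans hy1') (by simp; omega)
  simp at e1 e2
  simp [e1, e2]

lemma case2_unique {k : ℕ} {y : List Bool} {t t' : ℕ × List Bool × List Bool}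
    (h : case2 k y t) (h' : case2 k y t') : t = t' := by
  obtain ⟨ℓ, w, v⟩ := t; obtain ⟨ℓ', w', v'⟩ := t'
  have F := case2_facts h; have F' := case2_facts h'
  obtain ⟨hl1, _, hw, _, _, hy1⟩ := h
  obtain ⟨hl1', _, hw', _, _, hy1'⟩ := h'
  dsimp only at hl1 hw hy1 hl1' hw' hy1'
  have hll : ℓ = ℓ' := by
    by_contra hne
    rcases Nat.lt_or_ge ℓ ℓ' with hlt | hge
    · have h1 := F.2.2 (2*ℓ' - 1 - 2*ℓ)
      rw [show 2*ℓ + (2*ℓ' - 1 - 2*ℓ) = 2*ℓ' - 1 by omega, F'.2.1] at h1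
      omega
    · have h1 := F'.2.2 (2*ℓ - 1 - 2*ℓ')
      rw [show 2*ℓ' + (2*ℓ - 1 - 2*ℓ') = 2*ℓ - 1 by omega, F.2.1] at h1
      omega
  subst hll
  have hwlen : w.length = w'.length := by
    have a1 := hw.1; have a2 := hw'.1
    rw [length_mirror] at a1 a2; omega
  obtain ⟨e1, e2⟩ := List.append_inj (hy1.symm.trans hy1') (by simp [hwlen])
  simp at e1 e2
  simp [e1, e2]

lemma case3_unique {k : ℕ} {y : List Bool} {t t' : ℕ × List Bool × List Bool}
    (h : case3 k y t) (h' : case3 k y t') : t = t' := by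
  obtain ⟨ℓ, u, w⟩ := t; obtain ⟨ℓ', u', w'⟩ := t'
  have F := case3_facts h; have F' := case3_facts h'
  obtain ⟨hl1, _, _, hul, _, hy1⟩ := h
  obtain ⟨hl1', _, _, hul', _, hy1'⟩ := h'
  dsimp only at hl1 hul hy1 hl1' hul' hy1'
  have hll : ℓ = ℓ' := by
    by_contra hne
    rcases Nat.lt_or_ge ℓ ℓ' with hlt | hge
    · have h1 := F'.1 (2*ℓ) (by omega) (by omega)
      rw [F.2] at h1; omega
    · have h1 := F.1 (2*ℓ') (by omega) (by omega)
      rw [F'.2] at h1; omega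
  subst hll
  obtain ⟨e1, e2⟩ := List.append_inj (hy1.symm.trans hy1')
    (by simp [length_compl]; omega)
  simp at e1 e2
  have eu : u = u' := by rw [← compl_compl u, e1, compl_compl]
  simp [eu, e2]

lemma case2_not_dyck {k ℓ : ℕ} {y w v : List Bool} (h : case2 k y (ℓ, w, v))
    (hD : isDyck y) : False := by
  have F := case2_facts h
  rw [isDyck_iff] at hD
  have h2 := hD.2 (2*ℓ - 1)
  rw [F.2.1] at h2
  have := hD.1
  omega

lemma ex1 {k : ℕ} {y : List Bool} (hk : 1 ≤ k) (hy : inB k y) (hD : isDyck y) :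
    ∃ t, case1 k y t := by
  obtain ⟨hlen, _⟩ := hy
  rw [isDyck_iff] at hD
  obtain ⟨hb0, hpre⟩ := hD
  have hPk : 1 ≤ k ∧ bal (y.take (2*k)) = 0 :=
    ⟨hk, by rw [bal_take_of_ge _ _ (by omega)]; exact hb0⟩
  have hex : ∃ m, 1 ≤ m ∧ bal (y.take (2*m)) = 0 := ⟨k, hPk⟩
  obtain ⟨hm1, hm0⟩ := Nat.find_spec hex
  set m := Nat.find hex with hmdef
  have hmk : m ≤ k := Nat.find_min' hex hPk
  have hpos : ∀ j, 1 ≤ j → j ≤ 2*m - 1 → 1 ≤ bal (y.take j) := by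
    intro j hj1 hj2
    have h0 := hpre j
    by_contra hcon
    push_neg at hcon
    have hb : bal (y.take j) = 0 := by omega
    have hpar := bal_take_parity y j (by omega)
    have hfind := Nat.find_min hex (show j/2 < m by omega)
    push_neg at hfind
    rw [show 2*(j/2) = j by omega] at hfind
    exact absurd hb (hfind (by omega))
  obtain ⟨a, b, hsplit, ht1, ht2⟩ := split3 y (2*m - 2) (by omega)
  rw [show 2*m - 2 + 2 = 2*m by omega] at hsplit
  have hs1 : bal (y.take 1) = 1 := by
    have h1 := hpos 1 le_rfl (by omega)
    have h0 : bal (y.take 0) = 0 := by simp [bal]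
    have h01 := (step_le y 0).1
    have h02 := bal_nil
    norm_num at h01
    omega
  have ha : a = true := by rw [ht1] at hs1; exact eq_true_of_bal hs1
  have hs2m1 : bal (y.take (2*m - 1)) = 1 := by
    have h1 := hpos (2*m - 1) (by omega) le_rfl
    have h2 := (step_le y (2*m - 1)).2
    rw [show 2*m - 1 + 1 = 2*m by omega] at h2
    omega
  have hb2 : b = false := by
    rw [show 2*m - 2 + 2 = 2*m by omega, show 2*m - 2 + 1 = 2*m - 1 by omega] at ht2
    have : bal (y.take (2*m)) = bal (y.take (2*m - 1)) + bal [b] := by rw [ht2, bal_append]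
    exact eq_false_of_bal (by omega)
  subst ha; subst hb2
  set u := (y.drop 1).take (2*m - 2) with hudef
  set v := y.drop (2*m) with hvdef
  have hul : u.length = 2*m - 2 := by
    rw [hudef, List.length_take, List.length_drop]; omega
  have hsm : ∀ j, j ≤ u.length → bal (y.take (j+1)) = 1 + bal (u.take j) := by
    intro j hj; rw [bal_take_small' hsplit hj, bal_true]
  have hbu : bal u = 0 := by
    have := hsm u.length le_rfl
    rw [List.take_length, show u.length + 1 = 2*m - 1 by omega] at this
    omega
  have hDu : isDyck u := by
    rw [isDyck_iff]
    refine ⟨hbu, fun n => ?_⟩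
    rcases le_or_gt n u.length with hn | hn
    · have h1 := hsm n hn
      have h2 := hpos (n+1) (by omega) (by omega)
      omega
    · rw [List.take_of_length_le (by omega)]; omega
  have hbg : ∀ j, bal (y.take (u.length + 2 + j)) = bal (v.take j) := by
    intro j; rw [bal_take_big' hsplit, bal_true, bal_false, hbu]; ring
  have hvlen : v.length = 2*(k - m) := by
    have := length_eq' hsplit; omega
  have hbv : bal v = 0 := by
    have := hbg v.length
    rw [List.take_length, bal_take_of_ge _ _ (by omega)] at this
    omega
  have hDv : isDyck v := by
    rw [isDyck_iff]
    refine ⟨hbv, fun n => ?_⟩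
    rcases le_or_gt n v.length with hn | hn
    · rw [← hbg n]; exact hpre _
    · rw [List.take_of_length_le (by omega)]; omega
  exact ⟨(m, u, v), hm1, hmk, hDu, by dsimp only; omega, hDv, by dsimp only; omega, hsplit⟩

lemma ex2 {k : ℕ} {y : List Bool} (hk : 1 ≤ k) (hy : inB k y) (hD : ¬isDyck y)
    (hs1 : bal (y.take 1) = 1) : ∃ t, case2 k y t := by
  obtain ⟨hlen, hct⟩ := hy
  have hbeq := bal_eq y
  have hc : bal y = 0 ∨ bal y = 2 := by
    rcases hct with h | h <;> rw [h] at hbeq <;> omega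
  have hy2k : bal (y.take (2*k)) = bal y := bal_take_of_ge _ _ (by omega)
  obtain ⟨j₀, hj₀le, hj₀⟩ : ∃ j₀, j₀ ≤ 2*k ∧ bal (y.take j₀) = bal y - 1 := by
    rcases hc with hc0 | hc2
    · rw [isDyck_iff] at hD
      push_neg at hD
      obtain ⟨n, hn⟩ := hD hc0
      have hn2k : n ≤ 2*k := by
        by_contra hcc; push_neg at hcc
        rw [bal_take_of_ge _ _ (by omega)] at hn; omega
      have h00 : bal (y.take 0) = 0 := by simp [bal]
      obtain ⟨t, ht1, ht2, ht3⟩ := ivt_s_down y 0 n (-1) (by omega) (by omega) (by omega)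
      exact ⟨t, by omega, by omega⟩
    · exact ⟨1, by omega, by omega⟩
  have hQ : bal (y.take (Nat.findGreatest (fun j => bal (y.take j) = bal y - 1) (2*k)))
      = bal y - 1 := Nat.findGreatest_spec (P := fun j => bal (y.take j) = bal y - 1) hj₀le hj₀
  set J := Nat.findGreatest (fun j => bal (y.take j) = bal y - 1) (2*k) with hJdef
  have hJle : J ≤ 2*k := Nat.findGreatest_le _
  have hge : ∀ i, J < i → bal y ≤ bal (y.take i) := by
    intro i hi
    rcases le_or_gt i (2*k) with hi2 | hi2
    · by_contra hcon; push_neg at hcon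
      have hne : bal (y.take i) ≠ bal y - 1 := Nat.findGreatest_is_greatest hi hi2
      obtain ⟨t, ht1, ht2, ht3⟩ := ivt_s_up y i (2*k) (bal y - 1) hi2 (by omega) (by omega)
      exact Nat.findGreatest_is_greatest (show J < t by omega) ht2 ht3
    · rw [bal_take_of_ge _ _ (by omega)]
  have hJ2k : J < 2*k := by
    rcases Nat.eq_or_lt_of_le hJle with he | h
    · exfalso; rw [he, hy2k] at hQ; omega
    · exact h
  have hJ1 : 1 ≤ J := by
    rcases Nat.eq_zero_or_pos J with h0 | h
    · exfalso
      rw [h0] at hQ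
      have : bal (y.take 0) = 0 := by simp [bal]
      omega
    · exact h
  have hsJ1 : bal (y.take (J+1)) = bal y := by
    have := (step_le y J).1
    have h2 := hge (J+1) (by omega)
    omega
  have hpar := bal_take_parity y J (by omega)
  have hodd : J % 2 = 1 := by rcases hc with h | h <;> omega
  obtain ⟨a, b, hsplit, ht1, ht2⟩ := split3 y (J-1) (by omega)
  rw [show J - 1 + 2 = J + 1 by omega] at hsplit
  have ha : a = true := by rw [ht1] at hs1; exact eq_true_of_bal hs1
  have hb : b = true := by
    rw [show J - 1 + 2 = J + 1 by omega, show J - 1 + 1 = J by omega] at ht2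
    have : bal (y.take (J+1)) = bal (y.take J) + bal [b] := by rw [ht2, bal_append]
    exact eq_true_of_bal (by omega)
  subst ha; subst hb
  set w := (y.drop 1).take (J-1) with hwdef
  set v := y.drop (J+1) with hvdef
  have hwl : w.length = J - 1 := by
    rw [hwdef, List.length_take, List.length_drop]; omega
  have hbw : bal w = bal y - 2 := by
    have := bal_take_small' hsplit (le_refl w.length)
    rw [List.take_length, bal_true, show w.length + 1 = J by omega] at this
    omega
  have hbg : ∀ j, bal (y.take (J+1+j)) = bal y + bal (v.take j) := by
    intro j
    have := bal_take_big' hsplit j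
    rw [bal_true, show w.length + 2 + j = J + 1 + j by omega] at this
    omega
  have hvl : v.length = 2*k - (J+1) := by rw [hvdef, List.length_drop]; omega
  have hbv : bal v = 0 := by
    have := hbg v.length
    rw [List.take_length, bal_take_of_ge _ _ (by omega)] at this
    omega
  have hDv : isDyck v := by
    rw [isDyck_iff]; refine ⟨hbv, fun n => ?_⟩
    rcases le_or_gt n v.length with hn | hn
    · have h1 := hbg n
      have h2 := hge (J+1+n) (by omega)
      omega
    · rw [List.take_of_length_le (by omega)]; omega
  refine ⟨((J+1)/2, w, v), by dsimp only; omega, by dsimp only; omega, ?_, hDv,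
    by dsimp only; omega, hsplit⟩
  dsimp only
  constructor
  · rw [length_mirror]; omega
  · have h1 := bal_eq (mirror w)
    rw [length_mirror] at h1
    have h2 := bal_mirror w
    rcases hc with h | h <;> omega

lemma ex3 {k : ℕ} {y : List Bool} (hk : 1 ≤ k) (hy : inB k y)
    (hs1 : bal (y.take 1) = -1) : ∃ t, case3 k y t := by
  obtain ⟨hlen, hct⟩ := hy
  have hbeq := bal_eq y
  have hc : bal y = 0 ∨ bal y = 2 := by
    rcases hct with h | h <;> rw [h] at hbeq <;> omega
  have hy2k : bal (y.take (2*k)) = bal y := bal_take_of_ge _ _ (by omega)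
  obtain ⟨t0, ht01, ht02, ht03⟩ := ivt_s_up y 1 (2*k) 0 (by omega) (by omega) (by omega)
  have hex : ∃ j, 1 ≤ j ∧ bal (y.take j) = 0 := ⟨t0, ht01, ht03⟩
  obtain ⟨hJ1, hJ0⟩ := Nat.find_spec hex
  set J := Nat.find hex with hJdef
  have hJle : J ≤ 2*k := le_trans (Nat.find_min' hex ⟨ht01, ht03⟩) ht02
  have hneg : ∀ i, 1 ≤ i → i < J → bal (y.take i) ≤ -1 := by
    intro i hi1 hi2
    by_contra hcon; push_neg at hcon
    obtain ⟨t, h1, h2, h3⟩ := ivt_s_up y 1 i 0 hi1 (by omega) (by omega)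
    exact Nat.find_min hex (show t < J by omega) ⟨h1, h3⟩
  have hJ2 : 2 ≤ J := by
    rcases Nat.eq_or_lt_of_le hJ1 with h | h
    · exfalso; rw [← h] at hJ0; omega
    · omega
  have hsJm1 : bal (y.take (J-1)) = -1 := by
    have h1 := hneg (J-1) (by omega) (by omega)
    have h2 := (step_le y (J-1)).1
    rw [show J - 1 + 1 = J by omega] at h2
    omega
  have hpar := bal_take_parity y J (by omega)
  have heven : J % 2 = 0 := by omega
  obtain ⟨a, b, hsplit, ht1, ht2⟩ := split3 y (J-2) (by omega)
  rw [show J - 2 + 2 = J by omega] at hsplit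
  have ha : a = false := by rw [ht1] at hs1; exact eq_false_of_bal hs1
  have hb : b = true := by
    rw [show J - 2 + 2 = J by omega, show J - 2 + 1 = J - 1 by omega] at ht2
    have : bal (y.take J) = bal (y.take (J-1)) + bal [b] := by rw [ht2, bal_append]
    exact eq_true_of_bal (by omega)
  subst ha; subst hb
  set cu := (y.drop 1).take (J-2) with hcudef
  set w := y.drop J with hwdef
  have hcul : cu.length = J - 2 := by
    rw [hcudef, List.length_take, List.length_drop]; omega
  have hbcu : bal cu = 0 := by
    have := bal_take_small' hsplit (le_refl cu.length)
    rw [List.take_length, bal_false, show cu.length + 1 = J - 1 by omega] at this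
    omega
  have hDu : isDyck (compl cu) := by
    rw [isDyck_iff]
    refine ⟨by rw [bal_compl]; omega, fun n => ?_⟩
    rw [compl_take, bal_compl]
    rcases le_or_gt n cu.length with hn | hn
    · have h1 := bal_take_small' hsplit hn
      rw [bal_false] at h1
      have h2 := hneg (n+1) (by omega) (by omega)
      omega
    · rw [List.take_of_length_le (by omega)]; omega
  have hwl : w.length = 2*k - J := by rw [hwdef, List.length_drop]; omega
  have hbw : bal w = bal y := by
    have := bal_full' hsplit
    rw [bal_false, bal_true] at this
    omega
  refine ⟨(J/2, compl cu, w), by dsimp only; omega, by dsimp only; omega, hDu, ?_, ?_, ?_⟩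
  · dsimp only; rw [length_compl]; omega
  · dsimp only
    constructor
    · omega
    · have h1 := bal_eq w
      rcases hc with h | h <;> omega
  · dsimp only
    rw [compl_compl]
    exact hsplit

end S8

open S8 in
theorem stmt_8 (k : ℕ) (hk : 1 ≤ k) (y : List Bool) (hy : inB k y) :
    ((∃! t, case1 k y t) ∧ ¬(∃ t, case2 k y t) ∧ ¬(∃ t, case3 k y t))
    ∨ (¬(∃ t, case1 k y t) ∧ (∃! t, case2 k y t) ∧ ¬(∃ t, case3 k y t))
    ∨ (¬(∃ t, case1 k y t) ∧ ¬(∃ t, case2 k y t) ∧ (∃! t, case3 k y t)) := by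
  rcases y with _ | ⟨b, z⟩
  · exfalso; have := hy.1; simp at this; omega
  · cases b
    · right; right
      refine ⟨?_, ?_, ?_⟩
      · rintro ⟨⟨ℓ, u, v⟩, ht⟩
        have := ht.2.2.2.2.2.2
        simp [List.cons_append] at this
      · rintro ⟨⟨ℓ, w, v⟩, ht⟩
        have := ht.2.2.2.2.2
        simp [List.cons_append] at this
      · obtain ⟨t, ht⟩ := ex3 hk hy
          (by rw [show (false :: z).take 1 = [false] from rfl, bal_false])
        exact ⟨t, ht, fun t' ht' => case3_unique ht' ht⟩
    · have hs1 : bal ((true :: z).take 1) = 1 := by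
        rw [show (true :: z).take 1 = [true] from rfl, bal_true]
      by_cases hD : isDyck (true :: z)
      · left
        refine ⟨?_, ?_, ?_⟩
        · obtain ⟨t, ht⟩ := ex1 hk hy hD
          exact ⟨t, ht, fun t' ht' => case1_unique ht' ht⟩
        · rintro ⟨⟨ℓ, w, v⟩, ht⟩
          exact case2_not_dyck ht hD
        · rintro ⟨⟨ℓ, u, w⟩, ht⟩
          have := ht.2.2.2.2.2
          simp [List.cons_append] at this
      · right; left
        refine ⟨?_, ?_, ?_⟩
        · rintro ⟨⟨ℓ, u, v⟩, ht⟩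
          exact hD (case1_facts ht).2.2
        · obtain ⟨t, ht⟩ := ex2 hk hy hD hs1
          exact ⟨t, ht, fun t' ht' => case2_unique ht' ht⟩
        · rintro ⟨⟨ℓ, u, w⟩, ht⟩
          have := ht.2.2.2.2.2
          simp [List.cons_append] at this
end
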